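/- arXiv:1811.08174 — 4 statements merged into one kernel-verified Lean document; each statement's English description precedes it below -/
import Mathlib

section
/- Let N₁,…,N_n be T-point processes defined on an ergodic probability-preserving system (Ω,ℱ,ℙ,S), each having moments of all orders. Assume there exist a real number c > 0 and a partition π of {1,…,n} such that for all sets A₁,…,A_n ∈ 𝒜_f one has 𝔼[N₁(A₁)⋯N_n(A_n)] ≥ c·m_π(A₁×⋯×A_n). Then for any atom P of π and any A ∈ 𝒜_f, ℙ(A ∩ ⋂_{i∈P} N_i ≠ ∅) > 0 (identifying each simple counting measure N_i(ω) with its set of atoms). In particular, for any i,j in the same atom P, the processes N_i and N_j are not dissociated. -/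
open MeasureTheory ENNReal NNReal Set Bornology

noncomputable section

namespace PPP

variable {X Y Ω : Type*} [MeasurableSpace X] [MeasurableSpace Y] [MeasurableSpace Ω]

/-- A measure is *boundedly finite* if it gives finite mass to every bounded set. -/
def BddFin [Bornology X] (ξ : Measure X) : Prop :=
  ∀ B : Set X, IsBounded B → ξ B < ⊤

/-- A *simple counting measure*: a sum of Dirac masses on a countable set of distinct
points having finitely many points in every bounded set. -/
def IsSimpleCounting [Bornology X] (ξ : Measure X) : Prop :=
  ∃ s : Set X, s.Countable ∧ (∀ B : Set X, IsBounded B → (s ∩ B).Finite) ∧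
    ∀ A : Set X, MeasurableSet A → ξ A = (s ∩ A).encard

/-- A counting measure (no local-finiteness requirement; used on marked spaces). -/
def IsCountingOn (ξ : Measure Y) : Prop :=
  ∃ s : Set Y, s.Countable ∧ ∀ A : Set Y, MeasurableSet A → ξ A = (s ∩ A).encard

/-- A discrete (purely atomic) measure: concentrated on a countable set. -/
def IsDiscreteM (ξ : Measure X) : Prop := ∃ s : Set X, s.Countable ∧ ξ sᶜ = 0

/-- A continuous (atomless) measure. -/
def IsContinuousM (ξ : Measure X) : Prop := ∀ x : X, ξ {x} = 0

/-- An `ℝ≥0∞`-valued random variable has the Poisson distribution with parameter `r`. -/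
def HasPoissonDist (P : Measure Ω) (f : Ω → ℝ≥0∞) (r : ℝ≥0∞) : Prop :=
  ∀ n : ℕ, P {ω | f ω = n} =
    ENNReal.ofReal (Real.exp (-r.toReal) * r.toReal ^ n / n.factorial)

/-- `N` is a Poisson point process of intensity `ν`: counts over finitely many disjoint
sets of finite positive `ν`-measure are independent Poisson random variables. -/
def IsPoissonPP (P : Measure Ω) (N : Ω → Measure Y) (ν : Measure Y) : Prop :=
  ∀ (k : ℕ) (A : Fin k → Set Y), (∀ i, MeasurableSet (A i)) →
    (∀ i, 0 < ν (A i)) → (∀ i, ν (A i) < ⊤) →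
    Pairwise (Function.onFun Disjoint A) →
    ProbabilityTheory.iIndepFun (fun i ω => N ω (A i)) P ∧
    ∀ i, HasPoissonDist P (fun ω => N ω (A i)) (ν (A i))

/-- A `T`-random measure on the system `(Ω, P, S)`. -/
structure TRM [Bornology X] (μ : Measure X) (T : X → X) (P : Measure Ω) (S : Ω → Ω) where
  toFun : Ω → Measure X
  measurable' : Measurable toFun
  bddFin' : ∀ᵐ ω ∂P, BddFin (toFun ω)
  null' : ∀ A : Set X, MeasurableSet A → μ A = 0 → ∀ᵐ ω ∂P, toFun ω A = 0
  equivariant' : ∀ᵐ ω ∂P, toFun (S ω) = (toFun ω).map T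

/-- A `T`-point process: a `T`-random measure whose values are simple counting measures. -/
def TRM.IsPointProc [Bornology X] {μ : Measure X} {T : X → X} {P : Measure Ω} {S : Ω → Ω}
    (N : TRM μ T P S) : Prop :=
  ∀ᵐ ω ∂P, IsSimpleCounting (N.toFun ω)

/-- Moments of order `n`. -/
def HasMoment [Bornology X] (P : Measure Ω) (N : Ω → Measure X) (n : ℕ) : Prop :=
  ∀ A : Set X, IsBounded A → MeasurableSet A → ∫⁻ ω, (N ω A) ^ n ∂P < ⊤

/-- Moments of all orders. -/
def HasAllMoments [Bornology X] (P : Measure Ω) (N : Ω → Measure X) : Prop :=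
  ∀ n : ℕ, HasMoment P N n

/-- The value of the measure `m_π` on the rectangle `A 0 × ⋯ × A (n-1)`. -/
def mPartVal (μ : Measure X) {n : ℕ} (π : Finpartition (Finset.univ : Finset (Fin n)))
    (A : Fin n → Set X) : ℝ≥0∞ :=
  ∏ Q ∈ π.parts, μ (⋂ i ∈ Q, A i)

/-- The measure `m_π` on `X^n`. -/
def mPartMeasure (μ : Measure X) {n : ℕ} (π : Finpartition (Finset.univ : Finset (Fin n))) :
    Measure (Fin n → X) :=
  Measure.map (fun y : {Q // Q ∈ π.parts} → X =>
      fun i => y ⟨π.part i, π.part_mem.2 (Finset.mem_univ i)⟩)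
    (Measure.pi fun _ => μ)

/-- The `n`-fold Cartesian power of a map. -/
def piMap (T : X → X) (n : ℕ) : (Fin n → X) → (Fin n → X) := fun x i => T (x i)

/-- `T` has infinite ergodic index: all its Cartesian powers are ergodic. -/
def InfErgIndex (μ : Measure X) (T : X → X) : Prop :=
  ∀ n : ℕ, 1 ≤ n → Ergodic (piMap T n) (Measure.pi fun _ : Fin n => μ)

/-- The map `(x_i) ↦ (T^{k_i} x_i)` on `X^n`. -/
def zpowPiMap (T : X ≃ X) {n : ℕ} (k : Fin n → ℤ) : (Fin n → X) → (Fin n → X) :=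
  fun x i => ((T : Equiv.Perm X) ^ (k i)) (x i)

/-- Property (P): every boundedly finite `T^{×n}`-invariant measure on `X^n` with marginals
absolutely continuous with respect to `μ` is conservative, and it decomposes as a countable
combination of ergodic measures of the form `(T^{k₁}×⋯×T^{k_n})_* m_π`. -/
def PropertyP [MetricSpace X] (μ : Measure X) (T : X ≃ X) : Prop :=
  ∀ n : ℕ, 1 ≤ n → ∀ σ : Measure (Fin n → X),
    (∀ B : Set (Fin n → X), IsBounded B → σ B < ⊤) →
    (∀ i : Fin n, Measure.map (fun x => x i) σ ≪ μ) →
    MeasurePreserving (piMap (⇑T) n) σ σ →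
    Conservative (piMap (⇑T) n) σ ∧
    ∃ (c : ℕ → ℝ≥0∞) (πs : ℕ → Finpartition (Finset.univ : Finset (Fin n)))
      (ks : ℕ → Fin n → ℤ),
      (∀ j, c j ≠ 0 → Ergodic (piMap (⇑T) n)
          (Measure.map (zpowPiMap T (ks j)) (mPartMeasure μ (πs j)))) ∧
      σ = Measure.sum (fun j =>
            c j • Measure.map (zpowPiMap T (ks j)) (mPartMeasure μ (πs j)))

/-- The space `ℓ₁⁺(ℤ)` of summable families of nonnegative reals indexed by `ℤ`. -/
abbrev L1pos : Type := {a : ℤ → ℝ // (∀ k, 0 ≤ a k) ∧ Summable a}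

/-- The cluster random measure built from a counting measure on `X × ℓ₁⁺(ℤ)`:
each point `(x, (a_k)_k)` contributes the measure `Σ_k a_k δ_{T^k x}`. -/
def cluster (T : X ≃ X) (η : Measure (X × L1pos)) : Measure X :=
  η.bind fun p => Measure.sum fun k : ℤ =>
    (Real.toNNReal (p.2.1 k)) • Measure.dirac (((T : Equiv.Perm X) ^ k) p.1)

/-- Infinite divisibility of a probability measure on the space of measures on `X`
(with respect to addition of measures). -/
def IsInfDiv (m : Measure (Measure X)) : Prop :=
  ∀ k : ℕ, 1 ≤ k → ∃ mk : Measure (Measure X), ∃ _h : IsProbabilityMeasure mk,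
    m = Measure.map (fun v : Fin k → Measure X => ∑ i, v i) (Measure.pi fun _ : Fin k => mk)

/-- Two point processes are dissociated. -/
def Dissociated (P : Measure Ω) (S : Ω ≃ Ω) (N₁ N₂ : Ω → Measure X) : Prop :=
  ∀ᵐ ω ∂P, ∀ k : ℤ, ∀ x : X, N₁ ω {x} = 0 ∨ N₂ (((S : Equiv.Perm Ω) ^ k) ω) {x} = 0


open Filter Topology

def pieces {X : Type*} [MetricSpace X] (A : Set X) (u : ℕ → X) (r : ℝ) (k : ℕ) : Set X :=
  (A ∩ Metric.ball (u k) r) \ ⋃ (l : ℕ) (_ : l < k), Metric.ball (u l) r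

lemma pieces_subset_ball {X : Type*} [MetricSpace X] (A : Set X) (u : ℕ → X) (r : ℝ) (k : ℕ) :
    pieces A u r k ⊆ Metric.ball (u k) r := fun _ hx => hx.1.2

lemma pieces_subset {X : Type*} [MetricSpace X] (A : Set X) (u : ℕ → X) (r : ℝ) (k : ℕ) :
    pieces A u r k ⊆ A := fun _ hx => hx.1.1

lemma pieces_measurable {X : Type*} [MetricSpace X] [MeasurableSpace X] [BorelSpace X]
    (A : Set X) (hA : MeasurableSet A) (u : ℕ → X) (r : ℝ) (k : ℕ) :
    MeasurableSet (pieces A u r k) := by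
  apply MeasurableSet.diff
  · exact hA.inter measurableSet_ball
  · exact MeasurableSet.iUnion fun l => MeasurableSet.iUnion fun _ => measurableSet_ball

lemma pieces_disjoint {X : Type*} [MetricSpace X] (A : Set X) (u : ℕ → X) (r : ℝ) :
    Pairwise (Function.onFun Disjoint (pieces A u r)) := by
  have key : ∀ k l : ℕ, k < l → Disjoint (pieces A u r k) (pieces A u r l) := by
    intro k l h
    refine Set.disjoint_left.2 fun x hxk hxl => ?_
    exact hxl.2 (Set.mem_iUnion₂.2 ⟨k, h, hxk.1.2⟩)
  intro k l hkl
  rcases lt_or_gt_of_ne hkl with h | h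
  · exact key k l h
  · exact (key l k h).symm

lemma pieces_iUnion {X : Type*} [MetricSpace X] (A : Set X) (u : ℕ → X)
    (hu : DenseRange u) {r : ℝ} (hr : 0 < r) : (⋃ k, pieces A u r k) = A := by
  apply Set.Subset.antisymm
  · exact Set.iUnion_subset fun k => pieces_subset A u r k
  · intro x hx
    obtain ⟨k, hk⟩ := hu.exists_dist_lt x hr
    have hex : ∃ k, x ∈ Metric.ball (u k) r := ⟨k, by simpa [Metric.mem_ball, dist_comm] using hk⟩
    classical
    refine Set.mem_iUnion.2 ⟨Nat.find hex, ⟨⟨hx, Nat.find_spec hex⟩, ?_⟩⟩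
    intro hmem
    obtain ⟨l, hl⟩ := Set.mem_iUnion.1 hmem
    obtain ⟨hlk, hball⟩ := Set.mem_iUnion.1 hl
    exact Nat.find_min hex hlk hball

lemma tsum_prod_le_prod_tsum {ι : Type*} (Q : Finset ι) (hQ : Q.Nonempty)
    (f : ι → ℕ → ℝ≥0∞) : ∑' k, ∏ i ∈ Q, f i k ≤ ∏ i ∈ Q, ∑' k, f i k := by
  classical
  obtain ⟨i0, hi0⟩ := hQ
  calc ∑' k, ∏ i ∈ Q, f i k
      ≤ ∑' k, f i0 k * ∏ i ∈ Q.erase i0, ∑' k', f i k' := by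
        refine ENNReal.tsum_le_tsum fun k => ?_
        rw [← Finset.prod_erase_mul Q _ hi0, mul_comm]
        exact mul_le_mul_right (Finset.prod_le_prod' fun i _ => ENNReal.le_tsum k) _
    _ = (∑' k, f i0 k) * ∏ i ∈ Q.erase i0, ∑' k', f i k' := ENNReal.tsum_mul_right
    _ = ∏ i ∈ Q, ∑' k, f i k := by rw [mul_comm, Finset.prod_erase_mul Q _ hi0]

lemma prod_le_sum_pow {n : ℕ} (hn : 1 ≤ n) (x : Fin n → ℝ≥0∞) :
    ∏ i, x i ≤ ∑ i, x i ^ n := by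
  obtain ⟨i0, _, hmax⟩ := Finset.exists_max_image Finset.univ x
    (Finset.univ_nonempty_iff.2 (Fin.pos_iff_nonempty.1 hn))
  calc ∏ i, x i ≤ ∏ _i : Fin n, x i0 :=
        Finset.prod_le_prod' fun i _ => hmax i (Finset.mem_univ i)
    _ = x i0 ^ n := by rw [Finset.prod_const, Finset.card_univ, Fintype.card_fin]
    _ ≤ ∑ i, x i ^ n :=
        Finset.single_le_sum (f := fun i => x i ^ n) (fun i _ => zero_le) (Finset.mem_univ i0)

lemma key {X Ω : Type*} [MeasurableSpace X] [MetricSpace X] [BorelSpace X]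
    [TopologicalSpace.SeparableSpace X] [MeasurableSpace Ω]
    (μ : Measure X) (P : Measure Ω) [IsProbabilityMeasure P]
    {n : ℕ} (N : Fin n → Ω → Measure X)
    (hNm : ∀ (i : Fin n) (B : Set X), MeasurableSet B → Measurable fun ω => N i ω B)
    (hpt : ∀ i, ∀ᵐ ω ∂P, IsSimpleCounting (N i ω))
    (hmom : ∀ i, HasAllMoments P (N i))
    (c : ℝ) (hc : 0 < c) (π : Finpartition (Finset.univ : Finset (Fin n)))
    (hlow : ∀ A : Fin n → Set X, (∀ i, MeasurableSet (A i)) →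
        (∀ i, 0 < μ (A i)) → (∀ i, μ (A i) < ⊤) →
        ENNReal.ofReal c * mPartVal μ π A ≤ ∫⁻ ω, ∏ i, N i ω (A i) ∂P)
    (Q : Finset (Fin n)) (hQ : Q ∈ π.parts)
    (A : Set X) (hA : MeasurableSet A) (hApos : 0 < μ A) (hAfin : μ A < ⊤)
    (hAbdd : IsBounded A) :
    0 < P {ω | ∃ x ∈ A, ∀ i ∈ Q, N i ω {x} ≠ 0} := by
  classical
  obtain ⟨i0, hi0Q⟩ := π.nonempty_of_mem_parts hQ
  have hn : 1 ≤ n := i0.pos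
  have hXne : Nonempty X := ⟨(MeasureTheory.nonempty_of_measure_ne_zero hApos.ne').some⟩
  obtain ⟨u, hu⟩ := TopologicalSpace.exists_dense_seq X
  set r : ℕ → ℝ := fun m => 1 / (m + 1) with hr_def
  have hrpos : ∀ m : ℕ, 0 < r m := fun m => by positivity
  set D : ℕ → ℕ → Set X := fun m k => pieces A u (r m) k with hD_def
  have hDms : ∀ m k, MeasurableSet (D m k) := fun m k => pieces_measurable A hA u (r m) k
  have hDsub : ∀ m k, D m k ⊆ A := fun m k => pieces_subset A u (r m) k
  have hcov : ∀ m, (⋃ k, D m k) = A := fun m => pieces_iUnion A u hu (hrpos m)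
  set E := {ω | ∃ x ∈ A, ∀ i ∈ Q, N i ω {x} ≠ 0} with hE_def
  by_contra hP
  have hE0 : P E = 0 := by
    rcases (zero_le : 0 ≤ P E).lt_or_eq with h | h
    · exact absurd h hP
    · exact h.symm
  have hEnm : ∀ᵐ ω ∂P, ω ∉ E := measure_eq_zero_iff_ae_notMem.1 hE0
  set K : ℝ≥0∞ := ∏ _Q' ∈ π.parts.erase Q, μ A with hK_def
  have hK0 : K ≠ 0 := by
    rw [hK_def]
    exact Finset.prod_ne_zero_iff.2 fun _ _ => hApos.ne'
  have hKfin : K ≠ ⊤ := by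
    rw [hK_def]
    exact (ENNReal.prod_lt_top fun _ _ => hAfin).ne
  set Z : Ω → ℝ≥0∞ := fun ω => ∏ i ∈ Qᶜ, N i ω A with hZ_def
  set W : Ω → ℝ≥0∞ := fun ω => ∏ i, N i ω A with hW_def
  set G : ℕ → Ω → ℝ≥0∞ := fun m ω => ∑' k, ∏ i ∈ Q, N i ω (D m k) with hG_def
  have hZmeas : Measurable Z := Finset.measurable_prod _ fun i _ => hNm i A hA
  have hGmeas : ∀ m, Measurable fun ω => G m ω * Z ω := by
    intro m
    exact (Measurable.ennreal_tsum fun k =>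
      Finset.measurable_prod _ fun i _ => hNm i _ (hDms m k)).mul hZmeas
  -- Step 1 : lower bound
  have main : ∀ m, ENNReal.ofReal c * (μ A * K) ≤ ∫⁻ ω, G m ω * Z ω ∂P := by
    intro m
    have per : ∀ k, ENNReal.ofReal c * (μ (D m k) * K) ≤
        ∫⁻ ω, (∏ i ∈ Q, N i ω (D m k)) * Z ω ∂P := by
      intro k
      by_cases h0 : μ (D m k) = 0
      · simp [h0]
      · set B : Fin n → Set X := fun i => if i ∈ Q then D m k else A with hB_def
        have h1 : ∀ i, MeasurableSet (B i) := fun i => by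
          by_cases hi : i ∈ Q <;> simp [hB_def, hi, hDms m k, hA]
        have h2 : ∀ i, 0 < μ (B i) := fun i => by
          by_cases hi : i ∈ Q <;> simp [hB_def, hi, pos_iff_ne_zero.2 h0, hApos]
        have h3 : ∀ i, μ (B i) < ⊤ := fun i => by
          by_cases hi : i ∈ Q
          · simpa [hB_def, hi] using lt_of_le_of_lt (measure_mono (hDsub m k)) hAfin
          · simpa [hB_def, hi] using hAfin
        have hQint : (⋂ i ∈ Q, B i) = D m k := by
          apply Set.Subset.antisymm
          · intro x hx
            have := Set.mem_iInter₂.1 hx i0 hi0Q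
            simpa [hB_def, hi0Q] using this
          · intro x hx
            exact Set.mem_iInter₂.2 fun i hi => by simpa [hB_def, hi] using hx
        have hval : mPartVal μ π B = μ (D m k) * K := by
          unfold mPartVal
          rw [← Finset.prod_erase_mul π.parts _ hQ, hQint, hK_def, mul_comm]
          congr 1
          refine Finset.prod_congr rfl fun Q' hQ' => ?_
          obtain ⟨hQ'ne, hQ'parts⟩ := Finset.mem_erase.1 hQ'
          obtain ⟨j, hj⟩ := π.nonempty_of_mem_parts hQ'parts
          have hQ'int : (⋂ i ∈ Q', B i) = A := by
            apply Set.Subset.antisymm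
            · intro x hx
              have := Set.mem_iInter₂.1 hx j hj
              have hjQ : j ∉ Q := fun hjQ => hQ'ne (π.eq_of_mem_parts hQ'parts hQ hj hjQ)
              simpa [hB_def, hjQ] using this
            · intro x hx
              refine Set.mem_iInter₂.2 fun i hi => ?_
              have hiQ : i ∉ Q := fun hiQ => hQ'ne (π.eq_of_mem_parts hQ'parts hQ hi hiQ)
              simpa [hB_def, hiQ] using hx
          rw [hQ'int]
        have hprod : ∀ ω, ∏ i, N i ω (B i) = (∏ i ∈ Q, N i ω (D m k)) * Z ω := by
          intro ω
          rw [hZ_def, ← Finset.prod_mul_prod_compl Q (fun i => N i ω (B i))]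
          congr 1
          · exact Finset.prod_congr rfl fun i hi => by simp [hB_def, hi]
          · exact Finset.prod_congr rfl fun i hi => by
              simp [hB_def, Finset.mem_compl.1 hi]
        calc ENNReal.ofReal c * (μ (D m k) * K) = ENNReal.ofReal c * mPartVal μ π B := by
              rw [hval]
          _ ≤ ∫⁻ ω, ∏ i, N i ω (B i) ∂P := hlow B h1 h2 h3
          _ = ∫⁻ ω, (∏ i ∈ Q, N i ω (D m k)) * Z ω ∂P := by
              exact lintegral_congr fun ω => hprod ω
    calc ENNReal.ofReal c * (μ A * K)
        = ∑' k, ENNReal.ofReal c * (μ (D m k) * K) := by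
          rw [← hcov m, measure_iUnion (pieces_disjoint A u (r m)) (hDms m),
            ENNReal.tsum_mul_left, ENNReal.tsum_mul_right]
      _ ≤ ∑' k, ∫⁻ ω, (∏ i ∈ Q, N i ω (D m k)) * Z ω ∂P := ENNReal.tsum_le_tsum per
      _ = ∫⁻ ω, ∑' k, (∏ i ∈ Q, N i ω (D m k)) * Z ω ∂P := by
          exact (lintegral_tsum (f := fun k ω => (∏ i ∈ Q, N i ω (D m k)) * Z ω)
            fun k => ((Finset.measurable_prod _ fun i _ =>
            hNm i _ (hDms m k)).mul hZmeas).aemeasurable).symm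
      _ = ∫⁻ ω, G m ω * Z ω ∂P := by
          refine lintegral_congr fun ω => ?_
          rw [hG_def, ENNReal.tsum_mul_right]
  -- Step 2 : domination
  have hdom : ∀ m ω, G m ω * Z ω ≤ W ω := by
    intro m ω
    have h1 : G m ω ≤ ∏ i ∈ Q, N i ω A := by
      calc G m ω ≤ ∏ i ∈ Q, ∑' k, N i ω (D m k) :=
            tsum_prod_le_prod_tsum Q ⟨i0, hi0Q⟩ _
        _ = ∏ i ∈ Q, N i ω A := by
            refine Finset.prod_congr rfl fun i _ => ?_
            rw [← measure_iUnion (pieces_disjoint A u (r m)) (hDms m), hcov m]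
    calc G m ω * Z ω ≤ (∏ i ∈ Q, N i ω A) * Z ω := mul_le_mul_left h1 _
      _ = W ω := by rw [hW_def, hZ_def, Finset.prod_mul_prod_compl]
  -- Step 3 : integrable bound
  have hWint : ∫⁻ ω, W ω ∂P ≠ ⊤ := by
    have hle : ∀ ω, W ω ≤ ∑ i, (N i ω A) ^ n := fun ω => prod_le_sum_pow hn _
    have : ∫⁻ ω, W ω ∂P ≤ ∑ i : Fin n, ∫⁻ ω, (N i ω A) ^ n ∂P := by
      calc ∫⁻ ω, W ω ∂P ≤ ∫⁻ ω, ∑ i, (N i ω A) ^ n ∂P := lintegral_mono hle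
        _ = ∑ i : Fin n, ∫⁻ ω, (N i ω A) ^ n ∂P :=
            lintegral_finset_sum _ fun i _ => (hNm i A hA).pow_const n
    exact (lt_of_le_of_lt this (ENNReal.sum_lt_top.2 fun i _ =>
      hmom i n A hAbdd hA)).ne
  -- Step 4 : a.e. convergence to zero
  have hconv : ∀ᵐ ω ∂P, Tendsto (fun m => G m ω * Z ω) atTop (𝓝 0) := by
    have hptall : ∀ᵐ ω ∂P, ∀ i, IsSimpleCounting (N i ω) := ae_all_iff.2 hpt
    filter_upwards [hEnm, hptall] with ω hωE hωsc
    set s : Fin n → Set X := fun i => (hωsc i).choose with hs_def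
    have hsspec : ∀ i, (s i).Countable ∧ (∀ B : Set X, IsBounded B → ((s i) ∩ B).Finite) ∧
        ∀ A' : Set X, MeasurableSet A' → N i ω A' = ((s i) ∩ A').encard :=
      fun i => (hωsc i).choose_spec
    set F : Set X := ⋃ i ∈ Q, ((s i) ∩ A) with hF_def
    have hF : F.Finite := Set.Finite.biUnion Q.finite_toSet fun i _ => (hsspec i).2.1 A hAbdd
    have hsep : ∀ᶠ m in atTop, ∀ p ∈ F, ∀ q ∈ F, p ≠ q → 2 * r m < dist p q := by
      rw [hF.eventually_all]
      intro p hp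
      rw [hF.eventually_all]
      intro q hq
      by_cases hpq : p = q
      · exact Eventually.of_forall fun m h => absurd hpq h
      · have hd : 0 < dist p q := dist_pos.2 hpq
        have htend : Tendsto (fun m : ℕ => 2 * r m) atTop (𝓝 0) := by
          have h0 : Tendsto r atTop (𝓝 (0 : ℝ)) := by
            rw [hr_def]; exact tendsto_one_div_add_atTop_nhds_zero_nat
          simpa [hr_def, one_div] using h0.const_mul (2 : ℝ)
        filter_upwards [htend.eventually_lt_const hd] with m hm _
        exact hm
    apply tendsto_nhds_of_eventually_eq
    filter_upwards [hsep] with m hm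
    suffices hG0 : G m ω = 0 by rw [hG0, zero_mul]
    have hterm : ∀ k, ∏ i ∈ Q, N i ω (D m k) = 0 := by
      intro k
      by_contra hne
      have hall : ∀ i ∈ Q, N i ω (D m k) ≠ 0 := Finset.prod_ne_zero_iff.1 hne
      have hex : ∀ i ∈ Q, ((s i) ∩ D m k).Nonempty := by
        intro i hi
        rw [← Set.encard_ne_zero]
        have h2 := hall i hi
        rw [(hsspec i).2.2 (D m k) (hDms m k)] at h2
        intro h0
        exact h2 (by rw [h0]; simp)
      have hexx : ∀ i ∈ Q, ∃ x, x ∈ (s i) ∩ D m k := fun i hi => hex i hi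
      choose! xp hxp using hexx
      have hinF : ∀ i ∈ Q, xp i ∈ F := by
        intro i hi
        exact Set.mem_biUnion hi ⟨(hxp i hi).1, hDsub m k (hxp i hi).2⟩
      have heq : ∀ i ∈ Q, xp i = xp i0 := by
        intro i hi
        by_contra hne'
        have hclose : dist (xp i) (xp i0) < 2 * r m := by
          have h1 : dist (xp i) (u k) < r m :=
            Metric.mem_ball.1 (pieces_subset_ball A u (r m) k (hxp i hi).2)
          have h2 : dist (xp i0) (u k) < r m :=
            Metric.mem_ball.1 (pieces_subset_ball A u (r m) k (hxp i0 hi0Q).2)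
          calc dist (xp i) (xp i0) ≤ dist (xp i) (u k) + dist (u k) (xp i0) :=
                dist_triangle _ _ _
            _ < r m + r m := by rw [dist_comm (u k)]; exact add_lt_add h1 h2
            _ = 2 * r m := by ring
        exact absurd hclose (not_lt.2 (le_of_lt (hm _ (hinF i hi) _ (hinF i0 hi0Q) hne')))
      refine hωE ⟨xp i0, hDsub m k (hxp i0 hi0Q).2, fun i hi => ?_⟩
      have hxi : xp i0 ∈ s i := by rw [← heq i hi]; exact (hxp i hi).1
      rw [(hsspec i).2.2 {xp i0} (measurableSet_singleton _)]
      rw [Set.inter_eq_self_of_subset_right (Set.singleton_subset_iff.2 hxi)]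
      simp
    rw [hG_def]
    simp [hterm]
  -- Conclusion via dominated convergence
  have hDCT := tendsto_lintegral_of_dominated_convergence (f := fun _ => 0) W hGmeas
    (fun m => Eventually.of_forall (hdom m)) hWint hconv
  rw [lintegral_zero] at hDCT
  have hle : ENNReal.ofReal c * (μ A * K) ≤ 0 :=
    ge_of_tendsto hDCT (Eventually.of_forall main)
  have hpos : ENNReal.ofReal c * (μ A * K) ≠ 0 := by
    apply mul_ne_zero
    · simpa using hc
    · exact mul_ne_zero hApos.ne' hK0
  exact hpos (le_antisymm hle zero_le)


/-- (Graph-measures lemma.) If the joint moment of `N₁,…,N_n` dominates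
`c·m_π`, then for each atom `Q` of `π` and each `A ∈ 𝒜_f`, with positive probability the
processes `N_i`, `i ∈ Q`, share a common point in `A`; in particular they are pairwise
not dissociated. -/
theorem stmt3
    {X : Type*} [MeasurableSpace X] [MetricSpace X] [BorelSpace X]
    [TopologicalSpace.SeparableSpace X] [CompleteSpace X]
    {Ω : Type*} [MeasurableSpace Ω]
    (μ : Measure X) (hμbdd : BddFin μ) (hμcont : IsContinuousM μ) (hμinf : μ Set.univ = ⊤)
    (T : X ≃ X) (hTmeas : Measurable ⇑T) (hTmeas' : Measurable ⇑T.symm)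
    (hT : MeasurePreserving ⇑T μ μ)
    (P : Measure Ω) [IsProbabilityMeasure P]
    (S : Ω ≃ Ω) (hS : MeasurePreserving ⇑S P P) (hSerg : Ergodic ⇑S P)
    (n : ℕ) (Ns : Fin n → TRM μ (⇑T) P (⇑S))
    (hpt : ∀ i, (Ns i).IsPointProc) (hmom : ∀ i, HasAllMoments P (Ns i).toFun)
    (c : ℝ) (hc : 0 < c) (π : Finpartition (Finset.univ : Finset (Fin n)))
    (hlow : ∀ A : Fin n → Set X, (∀ i, MeasurableSet (A i)) →
        (∀ i, 0 < μ (A i)) → (∀ i, μ (A i) < ⊤) →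
        ENNReal.ofReal c * mPartVal μ π A ≤ ∫⁻ ω, ∏ i, (Ns i).toFun ω (A i) ∂P) :
    (∀ Q ∈ π.parts, ∀ A : Set X, MeasurableSet A → 0 < μ A → μ A < ⊤ →
        0 < P {ω | ∃ x ∈ A, ∀ i ∈ Q, (Ns i).toFun ω {x} ≠ 0}) ∧
    (∀ Q ∈ π.parts, ∀ i ∈ Q, ∀ j ∈ Q,
        ¬ Dissociated P S (Ns i).toFun (Ns j).toFun) := by
  classical
  have hNm : ∀ (i : Fin n) (B : Set X), MeasurableSet B →
      Measurable fun ω => (Ns i).toFun ω B :=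
    fun i B hB => (Measure.measurable_coe hB).comp (Ns i).measurable'
  have part1 : ∀ Q ∈ π.parts, ∀ A : Set X, MeasurableSet A → 0 < μ A → μ A < ⊤ →
      0 < P {ω | ∃ x ∈ A, ∀ i ∈ Q, (Ns i).toFun ω {x} ≠ 0} := by
    intro Q hQ A hA hApos hAfin
    have hXne : Nonempty X := ⟨(MeasureTheory.nonempty_of_measure_ne_zero hApos.ne').some⟩
    obtain ⟨x0⟩ := hXne
    obtain ⟨m, hm⟩ : ∃ m : ℕ, 0 < μ (A ∩ Metric.closedBall x0 m) := by
      by_contra h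
      push_neg at h
      have h0 : ∀ m : ℕ, μ (A ∩ Metric.closedBall x0 m) = 0 :=
        fun m => le_antisymm (h m) zero_le
      have hsub : A ⊆ ⋃ m : ℕ, A ∩ Metric.closedBall x0 m := by
        intro x hx
        exact Set.mem_iUnion.2 ⟨⌈dist x x0⌉₊, hx, Metric.mem_closedBall.2 (Nat.le_ceil _)⟩
      have : μ A = 0 := measure_mono_null hsub
        (le_antisymm ((measure_iUnion_le _).trans (by simp [h0])) zero_le)
      exact hApos.ne' this
    have h' := key μ P (fun i => (Ns i).toFun) hNm hpt hmom c hc π hlow Q hQ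
      (A ∩ Metric.closedBall x0 m) (hA.inter measurableSet_closedBall) hm
      (lt_of_le_of_lt (measure_mono Set.inter_subset_left) hAfin)
      (Metric.isBounded_closedBall.subset Set.inter_subset_right)
    refine lt_of_lt_of_le h' (measure_mono fun ω hω => ?_)
    obtain ⟨x, hxA', hx⟩ := hω
    exact ⟨x, hxA'.1, hx⟩
  refine ⟨part1, ?_⟩
  intro Q hQ i hi j hj hdis
  have hXne : Nonempty X := by
    by_contra h
    rw [not_nonempty_iff] at h
    have h0 : μ Set.univ = 0 := by
      rw [Set.univ_eq_empty_iff.2 h]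
      exact measure_empty
    rw [hμinf] at h0
    exact ENNReal.top_ne_zero h0
  obtain ⟨x0⟩ := hXne
  obtain ⟨m, hm⟩ : ∃ m : ℕ, 0 < μ (Metric.closedBall x0 m) := by
    by_contra h
    push_neg at h
    have h0 : ∀ m : ℕ, μ (Metric.closedBall x0 m) = 0 :=
      fun m => le_antisymm (h m) zero_le
    have hsub : (Set.univ : Set X) ⊆ ⋃ m : ℕ, Metric.closedBall x0 m := by
      intro x _
      exact Set.mem_iUnion.2 ⟨⌈dist x x0⌉₊, Metric.mem_closedBall.2 (Nat.le_ceil _)⟩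
    have : μ Set.univ = 0 := measure_mono_null hsub
      (le_antisymm ((measure_iUnion_le _).trans (by simp [h0])) zero_le)
    rw [hμinf] at this
    exact ENNReal.top_ne_zero this
  have hball := part1 Q hQ (Metric.closedBall x0 m) measurableSet_closedBall hm
    (hμbdd _ Metric.isBounded_closedBall)
  have h0 : P {ω | ¬ ∀ (k : ℤ) (x : X), (Ns i).toFun ω {x} = 0 ∨
      (Ns j).toFun (((S : Equiv.Perm Ω) ^ k) ω) {x} = 0} = 0 := ae_iff.1 hdis
  have hsub : {ω | ∃ x ∈ Metric.closedBall x0 (m : ℝ), ∀ i' ∈ Q, (Ns i').toFun ω {x} ≠ 0} ⊆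
      {ω | ¬ ∀ (k : ℤ) (x : X), (Ns i).toFun ω {x} = 0 ∨
        (Ns j).toFun (((S : Equiv.Perm Ω) ^ k) ω) {x} = 0} := by
    intro ω hω hgood
    obtain ⟨x, _, hall⟩ := hω
    have hk0 : ((S : Equiv.Perm Ω) ^ (0 : ℤ)) ω = ω := by simp
    rcases hgood 0 x with h | h
    · exact hall i hi h
    · rw [hk0] at h
      exact hall j hj h
  have hle : P {ω | ∃ x ∈ Metric.closedBall x0 (m : ℝ), ∀ i' ∈ Q,
      (Ns i').toFun ω {x} ≠ 0} = 0 :=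
    measure_mono_null hsub h0
  rw [hle] at hball
  exact lt_irrefl 0 hball

end PPP
end
end

section
/- Assume that T has the (P) property. If N is a square integrable T-random measure defined on some ergodic probability-preserving system (Ω,ℱ,ℙ,S), whose realizations are almost surely continuous (atomless) measures, then there exists α ≥ 0 such that N is constant and almost surely equal to αμ. -/
open MeasureTheory ENNReal NNReal Set Bornology
open ProbabilityTheory

noncomputable section

namespace PPP

variable {X Y Ω : Type*} [MeasurableSpace X] [MeasurableSpace Y] [MeasurableSpace Ω]

lemma enn_sq_aux {a b : ℝ≥0∞} (h : b ≤ a) :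
    a^2 + b^2 = 2*(a*b) + ((a-b)^2 + (b-a)^2) := by
  rcases eq_or_ne b ⊤ with rfl | hb
  · have ha : a = ⊤ := top_le_iff.mp h
    subst ha; simp
  · obtain ⟨d, rfl⟩ : ∃ d, a = b + d := ⟨a - b, (add_tsub_cancel_of_le h).symm⟩
    rw [ENNReal.add_sub_cancel_left hb, tsub_eq_zero_of_le le_self_add]
    ring

lemma enn_sq_ident (a b : ℝ≥0∞) :
    a^2 + b^2 = 2*(a*b) + ((a-b)^2 + (b-a)^2) := by
  rcases le_total b a with h | h
  · exact enn_sq_aux h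
  · have := enn_sq_aux h
    calc a^2 + b^2 = b^2 + a^2 := by rw [add_comm]
      _ = 2*(b*a) + ((b-a)^2 + (a-b)^2) := this
      _ = 2*(a*b) + ((a-b)^2 + (b-a)^2) := by rw [mul_comm b a, add_comm ((b-a)^2)]

lemma ae_eq_of_moments {P : Measure Ω} {f g : Ω → ℝ≥0∞}
    (hf : Measurable f) (hg : Measurable g) {v : ℝ≥0∞} (hv : v ≠ ⊤)
    (h1 : ∫⁻ ω, (f ω)^2 ∂P = v) (h2 : ∫⁻ ω, (g ω)^2 ∂P = v)
    (h3 : ∫⁻ ω, f ω * g ω ∂P = v) : f =ᵐ[P] g := by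
  have hmfg : Measurable fun ω => (f ω - g ω)^2 := ((hf.sub hg).pow_const 2)
  have hmgf : Measurable fun ω => (g ω - f ω)^2 := ((hg.sub hf).pow_const 2)
  have hkey : ∫⁻ ω, ((f ω - g ω)^2 + (g ω - f ω)^2) ∂P = 0 := by
    have hL : ∫⁻ ω, ((f ω)^2 + (g ω)^2) ∂P = v + v := by
      rw [lintegral_add_left (hf.pow_const 2), h1, h2]
    have hLR : ∫⁻ ω, ((f ω)^2 + (g ω)^2) ∂P
        = ∫⁻ ω, (2*(f ω * g ω) + ((f ω - g ω)^2 + (g ω - f ω)^2)) ∂P :=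
      lintegral_congr fun ω => enn_sq_ident _ _
    have hR : ∫⁻ ω, (2*(f ω * g ω) + ((f ω - g ω)^2 + (g ω - f ω)^2)) ∂P
        = 2*v + ∫⁻ ω, ((f ω - g ω)^2 + (g ω - f ω)^2) ∂P := by
      rw [lintegral_add_left (show Measurable fun ω => 2 * (f ω * g ω) from (hf.mul hg).const_mul 2),
        lintegral_const_mul 2 (show Measurable fun ω => f ω * g ω from hf.mul hg), h3]
    have h2v : (2 : ℝ≥0∞)*v = v + v := two_mul v
    have : v + v = v + (v + ∫⁻ ω, ((f ω - g ω)^2 + (g ω - f ω)^2) ∂P) := by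
      rw [← hL, hLR, hR, h2v, add_assoc]
    have hvv := (ENNReal.add_right_inj hv).mp this
    exact ((ENNReal.add_right_inj hv).mp
      (show v + (∫⁻ ω, ((f ω - g ω)^2 + (g ω - f ω)^2) ∂P) = v + 0 by
        rw [add_zero, ← hvv])).symm ▸ rfl
  have hae := (lintegral_eq_zero_iff (hmfg.add hmgf)).mp hkey
  filter_upwards [hae] with ω hω
  simp only [Pi.zero_apply, Pi.add_apply, add_eq_zero, pow_eq_zero_iff (two_ne_zero)] at hω
  exact le_antisymm (tsub_eq_zero_iff_le.mp hω.1) (tsub_eq_zero_iff_le.mp hω.2)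

lemma measurable_permPow {σ : Equiv.Perm X} (h : Measurable ⇑σ) :
    ∀ n : ℕ, Measurable ⇑(σ^n)
  | 0 => by rw [pow_zero]; exact measurable_id
  | n+1 => by
      rw [pow_succ, Equiv.Perm.coe_mul]
      exact (measurable_permPow h n).comp h

lemma measurable_permZpow (T : X ≃ X) (h : Measurable ⇑T) (h' : Measurable ⇑T.symm) :
    ∀ k : ℤ, Measurable ⇑((T : Equiv.Perm X)^k)
  | Int.ofNat n => by
      rw [Int.ofNat_eq_coe, zpow_natCast]; exact measurable_permPow h n
  | Int.negSucc n => by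
      rw [zpow_negSucc, ← inv_pow]
      have : ((T : Equiv.Perm X)⁻¹) = (T.symm : Equiv.Perm X) := rfl
      rw [this]; exact measurable_permPow h' (n+1)

lemma mp_permInv {μ : Measure X} (σ : Equiv.Perm X) (hm : Measurable ⇑σ)
    (hm' : Measurable ⇑σ.symm) (hp : MeasurePreserving ⇑σ μ μ) :
    MeasurePreserving ⇑σ.symm μ μ := by
  refine ⟨hm', ?_⟩
  have h1 : Measure.map ⇑σ.symm μ = Measure.map ⇑σ.symm (Measure.map ⇑σ μ) := by
    rw [hp.map_eq]
  rw [h1, Measure.map_map hm' hm]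
  have : ⇑σ.symm ∘ ⇑σ = id := by funext x; simp
  rw [this, Measure.map_id]

lemma mp_permPow {μ : Measure X} {σ : Equiv.Perm X} (hm : Measurable ⇑σ)
    (hp : MeasurePreserving ⇑σ μ μ) : ∀ n : ℕ, MeasurePreserving ⇑(σ^n) μ μ
  | 0 => by rw [pow_zero]; exact ⟨measurable_id, Measure.map_id⟩
  | n+1 => by
      rw [pow_succ, Equiv.Perm.coe_mul]
      exact (mp_permPow hm hp n).comp hp

lemma mp_permZpow {μ : Measure X} (T : X ≃ X) (h : Measurable ⇑T) (h' : Measurable ⇑T.symm)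
    (hp : MeasurePreserving ⇑T μ μ) :
    ∀ k : ℤ, MeasurePreserving ⇑((T : Equiv.Perm X)^k) μ μ
  | Int.ofNat n => by
      rw [Int.ofNat_eq_coe, zpow_natCast]; exact mp_permPow h hp n
  | Int.negSucc n => by
      rw [zpow_negSucc, ← inv_pow]
      have he : ((T : Equiv.Perm X)⁻¹) = (T.symm : Equiv.Perm X) := rfl
      rw [he]
      exact mp_permPow h' (mp_permInv (T : Equiv.Perm X) h h' hp) (n+1)

lemma finpart2 (π : Finpartition (Finset.univ : Finset (Fin 2))) :
    π.part 0 = π.part 1 ∨ (π.part 0 = {0} ∧ π.part 1 = {1}) := by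
  by_cases h : (1 : Fin 2) ∈ π.part 0
  · exact Or.inl (π.part_eq_of_mem (π.part_mem.2 (Finset.mem_univ 0)) h).symm
  · right
    have h0 : π.part 0 = {0} := by
      apply Finset.eq_singleton_iff_unique_mem.mpr
      refine ⟨π.mem_part (Finset.mem_univ 0), fun x hx => ?_⟩
      fin_cases x
      · rfl
      · exact absurd hx h
    have h1 : π.part 1 = {1} := by
      apply Finset.eq_singleton_iff_unique_mem.mpr
      refine ⟨π.mem_part (Finset.mem_univ 1), fun x hx => ?_⟩
      fin_cases x
      · exfalso
        have hx' : (0 : Fin 2) ∈ π.part 1 := hx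
        have he : π.part 0 = π.part 1 := π.part_eq_of_mem (π.part_mem.2 (Finset.mem_univ 1)) hx'
        exact h (he ▸ π.mem_part (Finset.mem_univ 1))
      · rfl
    exact ⟨h0, h1⟩


/-- If `T` has property (P), any square integrable ergodic `T`-random measure
with a.s. continuous realizations is a.s. equal to `α·μ` for some constant `α ≥ 0`. -/
theorem stmt7
    {X : Type*} [MeasurableSpace X] [MetricSpace X] [BorelSpace X]
    [TopologicalSpace.SeparableSpace X] [CompleteSpace X]
    {Ω : Type*} [MeasurableSpace Ω]
    (μ : Measure X) (hμbdd : BddFin μ) (hμcont : IsContinuousM μ) (hμinf : μ Set.univ = ⊤)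
    (T : X ≃ X) (hTmeas : Measurable ⇑T) (hTmeas' : Measurable ⇑T.symm)
    (hT : MeasurePreserving ⇑T μ μ)
    (hP : PropertyP μ T)
    (P : Measure Ω) [IsProbabilityMeasure P]
    (S : Ω ≃ Ω) (hS : MeasurePreserving ⇑S P P) (hSerg : Ergodic ⇑S P)
    (N : TRM μ (⇑T) P (⇑S)) (hsq : HasMoment P N.toFun 2)
    (hcont : ∀ᵐ ω ∂P, IsContinuousM (N.toFun ω)) :
    ∃ α : ℝ≥0, ∀ᵐ ω ∂P, N.toFun ω = (α : ℝ≥0∞) • μ := by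
  classical
  haveI : SecondCountableTopology X :=
    UniformSpace.secondCountable_of_separable X
  set G := N.toFun with hGdef
  have hGmeas : Measurable G := N.measurable'
  have hXne : Nonempty X := by
    by_contra h
    rw [not_nonempty_iff] at h
    have h0 : (Set.univ : Set X) = ∅ := Set.eq_empty_of_isEmpty _
    rw [h0] at hμinf
    simp at hμinf
  obtain ⟨x₀⟩ := hXne
  set D : ℕ → Set X := fun n => Metric.closedBall x₀ n with hDdef
  have hDmeas : ∀ n, MeasurableSet (D n) := fun n => measurableSet_closedBall
  have hDbdd : ∀ n, IsBounded (D n) := fun n => Metric.isBounded_closedBall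
  have hDunion : ⋃ n, D n = univ := by
    ext x
    simp only [mem_iUnion, mem_univ, iff_true]
    obtain ⟨n, hn⟩ := exists_nat_ge (dist x x₀)
    exact ⟨n, Metric.mem_closedBall.mpr hn⟩
  haveI : SigmaFinite μ := ⟨⟨⟨D, fun _ => trivial, fun n => hμbdd _ (hDbdd n), hDunion⟩⟩⟩
  -- the good set and the modified random measure G'
  have hGoodmeas : MeasurableSet {ω | ∀ n, G ω (D n) < ⊤} := by
    rw [Set.setOf_forall]
    exact MeasurableSet.iInter fun n =>
      ((Measure.measurable_coe (hDmeas n)).comp hGmeas) measurableSet_Iio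
  set Good : Set Ω := {ω | ∀ n, G ω (D n) < ⊤} with hGooddef
  set G' : Ω → Measure X := fun ω => if ω ∈ Good then G ω else 0 with hG'def
  have hG'meas : Measurable G' := Measurable.ite hGoodmeas hGmeas measurable_const
  have hGoodae : ∀ᵐ ω ∂P, ω ∈ Good := by
    filter_upwards [N.bddFin'] with ω h n using h (D n) (hDbdd n)
  have hG'good : ∀ ω, ω ∈ Good → G' ω = G ω := fun ω h => if_pos h
  have hG'le : ∀ ω (s : Set X), G' ω s ≤ G ω s := by
    intro ω s
    simp only [hG'def]
    split_ifs with h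
    · exact le_rfl
    · simp
  have hG'fin : ∀ ω n, G' ω (D n) < ⊤ := by
    intro ω n
    simp only [hG'def]
    split_ifs with h
    · exact h n
    · simp
  have hG'sig : ∀ ω, SigmaFinite (G' ω) :=
    fun ω => ⟨⟨⟨D, fun _ => trivial, fun n => hG'fin ω n, hDunion⟩⟩⟩
  -- the kernel κ
  set κ : Kernel Ω X := ⟨G', hG'meas⟩ with hκdef
  have hκapp : ∀ ω, κ ω = G' ω := fun ω => rfl
  -- s-finiteness of κ
  have hRmeas : ∀ n, MeasurableSet (disjointed D n) := MeasurableSet.disjointed hDmeas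
  have hRsub : ∀ n, disjointed D n ⊆ D n := fun n => disjointed_subset D n
  have hRfin : ∀ ω n, G' ω (disjointed D n) < ⊤ :=
    fun ω n => lt_of_le_of_lt (measure_mono (hRsub n)) (hG'fin ω n)
  set A2 : ℕ → ℕ → Set Ω := fun n m =>
    {ω | (m : ℝ≥0∞) ≤ G' ω (disjointed D n) ∧ G' ω (disjointed D n) < (m : ℝ≥0∞) + 1}
    with hA2def
  have hA2meas : ∀ n m, MeasurableSet (A2 n m) := by
    intro n m
    have hme : Measurable fun ω => G' ω (disjointed D n) :=
      (Measure.measurable_coe (hRmeas n)).comp hG'meas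
    exact (hme measurableSet_Ici).inter (hme measurableSet_Iio)
  have hA2uniq : ∀ ω n, ∃! m : ℕ, ω ∈ A2 n m := by
    intro ω n
    have hx : G' ω (disjointed D n) ≠ ⊤ := (hRfin ω n).ne
    obtain ⟨y, hy⟩ : ∃ y : ℝ≥0, G' ω (disjointed D n) = (y : ℝ≥0∞) :=
      ⟨_, (ENNReal.coe_toNNReal hx).symm⟩
    simp only [hA2def, mem_setOf_eq, hy]
    refine ⟨Nat.floor y, ⟨?_, ?_⟩, ?_⟩
    · exact_mod_cast Nat.floor_le (zero_le : (0:ℝ≥0) ≤ y)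
    · exact_mod_cast Nat.lt_floor_add_one y
    · intro m hm
      have h1 : (m : ℝ≥0) ≤ y := by exact_mod_cast hm.1
      have h2 : y < (m : ℝ≥0) + 1 := by exact_mod_cast hm.2
      exact ((Nat.floor_eq_iff (zero_le : (0:ℝ≥0) ≤ y)).mpr ⟨h1, by exact_mod_cast h2⟩).symm
  set ρ : ℕ × ℕ → Kernel Ω X := fun p =>
    ⟨fun ω => if ω ∈ A2 p.1 p.2 then (G' ω).restrict (disjointed D p.1) else 0, by
      refine Measurable.ite (hA2meas p.1 p.2) ?_ measurable_const
      refine Measure.measurable_of_measurable_coe _ fun s hs => ?_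
      simp_rw [Measure.restrict_apply hs]
      exact (Measure.measurable_coe (hs.inter (hRmeas p.1))).comp hG'meas⟩ with hρdef
  have hρapp : ∀ p ω, ρ p ω =
      if ω ∈ A2 p.1 p.2 then (G' ω).restrict (disjointed D p.1) else 0 := fun p ω => rfl
  have hρfin : ∀ p, IsFiniteKernel (ρ p) := by
    intro p
    refine ⟨⟨(p.2 : ℝ≥0∞) + 1, ?_, fun ω => ?_⟩⟩
    · exact ENNReal.add_lt_top.mpr ⟨ENNReal.natCast_lt_top p.2, ENNReal.one_lt_top⟩
    · rw [hρapp]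
      split_ifs with h
      · rw [Measure.restrict_apply MeasurableSet.univ, univ_inter]
        exact h.2.le
      · simp
  have hκsum : κ = Kernel.sum ρ := by
    refine Kernel.ext fun ω => Measure.ext fun s hs => ?_
    rw [Kernel.sum_apply' ρ ω hs, hκapp]
    rw [ENNReal.tsum_prod' (f := fun p : ℕ × ℕ => ρ p ω s)]
    have hinner : ∀ n : ℕ, ∑' m : ℕ, ρ (n, m) ω s = G' ω (s ∩ disjointed D n) := by
      intro n
      obtain ⟨m₀, hm₀, huniq⟩ := hA2uniq ω n
      have hval : ∀ m : ℕ, ρ (n, m) ω s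
          = if ω ∈ A2 n m then G' ω (s ∩ disjointed D n) else 0 := by
        intro m
        rw [hρapp]
        split_ifs with h
        · exact Measure.restrict_apply hs
        · simp
      rw [tsum_eq_single m₀ (fun m hm => by
        rw [hval m, if_neg (fun hmem => hm (huniq m hmem))])]
      rw [hval m₀, if_pos hm₀]
    rw [tsum_congr hinner]
    have hds : ⋃ n, s ∩ disjointed D n = s := by
      rw [← inter_iUnion, iUnion_disjointed, hDunion, inter_univ]
    rw [← measure_iUnion (fun i j hij =>
        ((disjoint_disjointed D) hij).mono inter_subset_right inter_subset_right)
        (fun n => hs.inter (hRmeas n)), hds]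
  haveI : IsSFiniteKernel κ := by
    rw [hκsum]
    haveI : ∀ p, IsSFiniteKernel (ρ p) := fun p => by haveI := hρfin p; infer_instance
    exact Kernel.isSFiniteKernel_sum
  -- the second moment measure on X × X
  set κ2 : Kernel Ω (X × X) := κ ×ₖ κ with hκ2def
  set σ' : Measure (X × X) := P.bind (fun ω => κ2 ω) with hσ'def
  have hσ'app : ∀ s : Set (X × X), MeasurableSet s → σ' s = ∫⁻ ω, κ2 ω s ∂P :=
    fun s hs => Measure.bind_apply hs (Kernel.measurable κ2).aemeasurable
  have hκ2rect : ∀ ω (s t : Set X), κ2 ω (s ×ˢ t) = G' ω s * G' ω t := by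
    intro ω s t
    rw [hκ2def, Kernel.prod_apply, Measure.prod_prod]
    rfl
  -- graphs of measurable functions are null for σ'
  have hσ'graph : ∀ g : X → X, Measurable g → σ' {p : X × X | p.2 = g p.1} = 0 := by
    intro g hg
    have hsm : MeasurableSet {p : X × X | p.2 = g p.1} :=
      measurable_snd.stronglyMeasurable.measurableSet_eq_fun
        ((hg.comp measurable_fst).stronglyMeasurable)
    rw [hσ'app _ hsm]
    have hz : ∀ᵐ ω ∂P, κ2 ω {p : X × X | p.2 = g p.1} = 0 := by
      filter_upwards [hGoodae, hcont] with ω hgood hc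
      rw [hκ2def, Kernel.prod_apply, Measure.prod_apply hsm]
      have h0 : ∀ x : X, (κ ω) (Prod.mk x ⁻¹' {p : X × X | p.2 = g p.1}) = 0 := by
        intro x
        have hset : (Prod.mk x ⁻¹' {p : X × X | p.2 = g p.1}) = {g x} := by
          ext y; simp [Set.mem_preimage, Set.mem_setOf_eq]
        rw [hset, hκapp, hG'good ω hgood]
        exact hc (g x)
      rw [lintegral_congr h0, lintegral_zero]
    rw [lintegral_congr_ae hz, lintegral_zero]
  -- σ' is invariant under T × T
  have hTT : Measurable (Prod.map ⇑T ⇑T) := hTmeas.prodMap hTmeas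
  have hgoodS : ∀ᵐ ω ∂P, S ω ∈ Good := by
    have h0 : P (⇑S ⁻¹' Goodᶜ) = 0 := by
      rw [hS.measure_preimage hGoodmeas.compl.nullMeasurableSet]
      exact ae_iff.mp hGoodae
    rw [ae_iff]
    exact h0
  have hσ'inv : Measure.map (Prod.map ⇑T ⇑T) σ' = σ' := by
    ext s hs
    rw [Measure.map_apply hTT hs, hσ'app _ (hTT hs), hσ'app _ hs]
    have hae : ∀ᵐ ω ∂P, κ2 ω (Prod.map ⇑T ⇑T ⁻¹' s) = κ2 (S ω) s := by
      filter_upwards [hGoodae, hgoodS, N.equivariant'] with ω h1 h2 h3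
      have hked : κ (S ω) = Measure.map ⇑T (κ ω) := by
        rw [hκapp, hκapp, hG'good _ h2, hG'good _ h1]
        exact h3
      rw [hκ2def, Kernel.prod_apply, Kernel.prod_apply, hked,
        Measure.map_prod_map _ _ hTmeas hTmeas, Measure.map_apply hTT hs]
    rw [lintegral_congr_ae hae, hS.lintegral_comp (Kernel.measurable_coe κ2 hs)]
  -- push to Fin 2 → X
  set J : X × X → (Fin 2 → X) := fun p i => if i = 0 then p.1 else p.2 with hJdef
  have hJ0 : ∀ p, J p 0 = p.1 := fun p => rfl
  have hJ1 : ∀ p, J p 1 = p.2 := fun p => if_neg (by decide)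
  have hJmeas : Measurable J := by
    refine measurable_pi_lambda _ fun i => ?_
    by_cases h : i = 0
    · simpa [hJdef, h] using measurable_fst
    · simpa [hJdef, h] using measurable_snd
  set σ₂ : Measure (Fin 2 → X) := Measure.map J σ' with hσ₂def
  set Rect : Set X → Set X → Set (Fin 2 → X) := fun A B => {x | x 0 ∈ A ∧ x 1 ∈ B}
    with hRectdef
  have hRectmeas : ∀ A B : Set X, MeasurableSet A → MeasurableSet B →
      MeasurableSet (Rect A B) := fun A B hA hB =>
    ((measurable_pi_apply 0) hA).inter ((measurable_pi_apply 1) hB)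
  have hJRect : ∀ A B : Set X, J ⁻¹' Rect A B = A ×ˢ B := by
    intro A B
    ext p
    simp only [hRectdef, mem_preimage, mem_setOf_eq, hJ0, hJ1, Set.mem_prod]
  have hσ₂rect : ∀ A B : Set X, MeasurableSet A → MeasurableSet B →
      σ₂ (Rect A B) = ∫⁻ ω, G ω A * G ω B ∂P := by
    intro A B hA hB
    rw [hσ₂def, Measure.map_apply hJmeas (hRectmeas A B hA hB), hJRect,
      hσ'app _ (hA.prod hB)]
    refine lintegral_congr_ae ?_
    filter_upwards [hGoodae] with ω h
    rw [hκ2rect, hG'good ω h]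
  -- hypotheses of property (P) for σ₂
  have hσ₂bdd : ∀ B : Set (Fin 2 → X), IsBounded B → σ₂ B < ⊤ := by
    intro B hB
    obtain ⟨r, hr⟩ := hB.subset_closedBall (fun _ => x₀)
    obtain ⟨n, hn⟩ := exists_nat_ge r
    have hBsub2 : B ⊆ Rect (D n) (D n) := by
      intro x hx
      have hdist := Metric.mem_closedBall.mp (hr hx)
      constructor
      · refine Metric.mem_closedBall.mpr (le_trans ?_ (le_trans hdist hn))
        exact (dist_le_pi_dist x (fun _ => x₀) 0)
      · refine Metric.mem_closedBall.mpr (le_trans ?_ (le_trans hdist hn))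
        exact (dist_le_pi_dist x (fun _ => x₀) 1)
    calc σ₂ B ≤ σ₂ (Rect (D n) (D n)) := measure_mono hBsub2
      _ = ∫⁻ ω, G ω (D n) * G ω (D n) ∂P := hσ₂rect _ _ (hDmeas n) (hDmeas n)
      _ = ∫⁻ ω, G ω (D n) ^ 2 ∂P := lintegral_congr fun ω => (sq _).symm
      _ < ⊤ := hsq (D n) (hDbdd n) (hDmeas n)
  have hσ₂ac : ∀ i : Fin 2, Measure.map (fun x : Fin 2 → X => x i) σ₂ ≪ μ := by
    intro i
    refine Measure.AbsolutelyContinuous.mk fun s hs hμs => ?_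
    rw [hσ₂def, Measure.map_map (measurable_pi_apply i) hJmeas,
      Measure.map_apply ((measurable_pi_apply i).comp hJmeas) hs]
    have hsnull : ∀ᵐ ω ∂P, G ω s = 0 := N.null' s hs hμs
    rcases eq_or_ne i 0 with rfl | hi
    · have hpre : ((fun x : Fin 2 → X => x 0) ∘ J) ⁻¹' s = s ×ˢ univ := by
        ext p; simp [hJ0, Set.mem_prod]
      rw [hpre, hσ'app _ (hs.prod MeasurableSet.univ)]
      have : ∀ᵐ ω ∂P, κ2 ω (s ×ˢ univ) = 0 := by
        filter_upwards [hsnull] with ω h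
        rw [hκ2rect]
        have : G' ω s = 0 := le_antisymm (h ▸ hG'le ω s) zero_le
        rw [this, zero_mul]
      rw [lintegral_congr_ae this, lintegral_zero]
    · rw [Fin.eq_one_of_ne_zero i hi] at *
      have hpre : ((fun x : Fin 2 → X => x 1) ∘ J) ⁻¹' s = univ ×ˢ s := by
        ext p; simp [hJ1, Set.mem_prod]
      rw [hpre, hσ'app _ (MeasurableSet.univ.prod hs)]
      have : ∀ᵐ ω ∂P, κ2 ω (univ ×ˢ s) = 0 := by
        filter_upwards [hsnull] with ω h
        rw [hκ2rect]
        have : G' ω s = 0 := le_antisymm (h ▸ hG'le ω s) zero_le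
        rw [this, mul_zero]
      rw [lintegral_congr_ae this, lintegral_zero]
  have hpiMapMeas : Measurable (piMap ⇑T 2) :=
    measurable_pi_lambda _ fun i => hTmeas.comp (measurable_pi_apply i)
  have hcomm : piMap ⇑T 2 ∘ J = J ∘ Prod.map ⇑T ⇑T := by
    funext p
    funext i
    by_cases h : i = 0 <;> simp [piMap, hJdef, h, Prod.map]
  have hσ₂pres : MeasurePreserving (piMap ⇑T 2) σ₂ σ₂ := by
    refine ⟨hpiMapMeas, ?_⟩
    rw [hσ₂def, Measure.map_map hpiMapMeas hJmeas, hcomm,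
      ← Measure.map_map hJmeas hTT, hσ'inv]
  obtain ⟨-, c, πs, ks, -, hdecomp⟩ := hP 2 (by norm_num) σ₂ hσ₂bdd hσ₂ac hσ₂pres
  have hFmeas : ∀ j, Measurable (fun y : {Q // Q ∈ (πs j).parts} → X =>
      fun i : Fin 2 => y ⟨(πs j).part i, (πs j).part_mem.2 (Finset.mem_univ i)⟩) :=
    fun j => measurable_pi_lambda _ fun i => measurable_pi_apply _
  have hZm : ∀ j, Measurable (zpowPiMap T (ks j)) := fun j =>
    measurable_pi_lambda _ fun i =>
      (measurable_permZpow T hTmeas hTmeas' (ks j i)).comp (measurable_pi_apply i)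
  have hmjapp : ∀ j (s : Set (Fin 2 → X)), MeasurableSet s →
      (Measure.map (zpowPiMap T (ks j)) (mPartMeasure μ (πs j))) s
        = (Measure.pi fun _ : {Q // Q ∈ (πs j).parts} => μ)
            ((zpowPiMap T (ks j) ∘ fun y : {Q // Q ∈ (πs j).parts} → X =>
              fun i : Fin 2 => y ⟨(πs j).part i, (πs j).part_mem.2 (Finset.mem_univ i)⟩) ⁻¹' s) := by
    intro j s hs
    rw [mPartMeasure, Measure.map_map (hZm j) (hFmeas j),
      Measure.map_apply ((hZm j).comp (hFmeas j)) hs]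
  have hσ₂sum : ∀ s : Set (Fin 2 → X), MeasurableSet s →
      σ₂ s = ∑' j, c j * (Measure.map (zpowPiMap T (ks j)) (mPartMeasure μ (πs j))) s := by
    intro s hs
    rw [hdecomp, Measure.sum_apply _ hs]
    simp only [Measure.smul_apply, smul_eq_mul]
  have hckill : ∀ j, (πs j).part 0 = (πs j).part 1 → c j = 0 := by
    intro j hpart
    set g : X → X := ⇑((T : Equiv.Perm X) ^ (ks j 1 - ks j 0)) with hgdef
    have hgmeas : Measurable g := measurable_permZpow T hTmeas hTmeas' _
    have hEmeas : MeasurableSet {x : Fin 2 → X | x 1 = g (x 0)} :=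
      (measurable_pi_apply 1).stronglyMeasurable.measurableSet_eq_fun
        ((hgmeas.comp (measurable_pi_apply 0)).stronglyMeasurable)
    have hσ₂E : σ₂ {x : Fin 2 → X | x 1 = g (x 0)} = 0 := by
      rw [hσ₂def, Measure.map_apply hJmeas hEmeas]
      have hJE : J ⁻¹' {x : Fin 2 → X | x 1 = g (x 0)} = {p : X × X | p.2 = g p.1} := by
        ext p
        simp only [mem_preimage, mem_setOf_eq, hJ0, hJ1]
      rw [hJE]
      exact hσ'graph g hgmeas
    have hsum := hσ₂sum _ hEmeas
    rw [hσ₂E] at hsum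
    have hterm := ENNReal.tsum_eq_zero.mp hsum.symm j
    have hmjE : (Measure.map (zpowPiMap T (ks j)) (mPartMeasure μ (πs j)))
        {x : Fin 2 → X | x 1 = g (x 0)} = ⊤ := by
      rw [hmjapp j _ hEmeas]
      have hpre : ((zpowPiMap T (ks j) ∘ fun y : {Q // Q ∈ (πs j).parts} → X =>
          fun i : Fin 2 => y ⟨(πs j).part i, (πs j).part_mem.2 (Finset.mem_univ i)⟩)
            ⁻¹' {x : Fin 2 → X | x 1 = g (x 0)}) = univ := by
        ext y
        simp only [mem_preimage, Function.comp_apply, mem_setOf_eq, mem_univ, iff_true]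
        show ((T : Equiv.Perm X) ^ (ks j 1)) (y ⟨(πs j).part 1, (πs j).part_mem.2 (Finset.mem_univ 1)⟩)
            = g (((T : Equiv.Perm X) ^ (ks j 0)) (y ⟨(πs j).part 0, (πs j).part_mem.2 (Finset.mem_univ 0)⟩))
        have hq : (⟨(πs j).part 0, (πs j).part_mem.2 (Finset.mem_univ 0)⟩ :
            {Q // Q ∈ (πs j).parts}) = ⟨(πs j).part 1, (πs j).part_mem.2 (Finset.mem_univ 1)⟩ :=
          Subtype.ext hpart
        rw [hq, hgdef, ← Equiv.Perm.mul_apply, ← zpow_add]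
        have hexp : ks j 1 - ks j 0 + ks j 0 = ks j 1 := by omega
        rw [hexp]
      rw [hpre, Measure.pi_univ]
      rw [hμinf, Finset.prod_const]
      haveI : Nonempty {Q // Q ∈ (πs j).parts} :=
        ⟨⟨(πs j).part 0, (πs j).part_mem.2 (Finset.mem_univ 0)⟩⟩
      refine ENNReal.top_pow ?_
      simp only [Finset.card_univ, Fintype.card_pos_iff]
      exact Fintype.card_ne_zero
    rw [hmjE] at hterm
    by_contra hc0
    rw [ENNReal.mul_top hc0] at hterm
    exact absurd hterm top_ne_zero
  have hpair : ∀ j (A B : Set X), MeasurableSet A → MeasurableSet B →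
      (πs j).part 0 = {0} → (πs j).part 1 = {1} →
      (Measure.map (zpowPiMap T (ks j)) (mPartMeasure μ (πs j))) (Rect A B) = μ A * μ B := by
    intro j A B hA hB h0 h1
    rw [hmjapp j _ (hRectmeas A B hA hB)]
    set q0 : {Q // Q ∈ (πs j).parts} :=
      ⟨(πs j).part 0, (πs j).part_mem.2 (Finset.mem_univ 0)⟩ with hq0
    set q1 : {Q // Q ∈ (πs j).parts} :=
      ⟨(πs j).part 1, (πs j).part_mem.2 (Finset.mem_univ 1)⟩ with hq1
    have hqne : q0 ≠ q1 := by
      intro h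
      have hvals := congrArg Subtype.val h
      rw [hq0, hq1] at hvals
      simp only [h0, h1] at hvals
      exact absurd hvals (by decide)
    have hqall : ∀ q : {Q // Q ∈ (πs j).parts}, q = q0 ∨ q = q1 := by
      rintro ⟨Q, hQ⟩
      obtain ⟨i, hi⟩ := (πs j).nonempty_of_mem_parts hQ
      rcases eq_or_ne i 0 with rfl | hne
      · exact Or.inl (Subtype.ext ((πs j).part_eq_of_mem hQ hi).symm)
      · rw [Fin.eq_one_of_ne_zero i hne] at hi
        exact Or.inr (Subtype.ext ((πs j).part_eq_of_mem hQ hi).symm)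
    set C : {Q // Q ∈ (πs j).parts} → Set X := fun q =>
      if q = q0 then ⇑((T : Equiv.Perm X) ^ (ks j 0)) ⁻¹' A
      else ⇑((T : Equiv.Perm X) ^ (ks j 1)) ⁻¹' B with hC
    have hpre : ((zpowPiMap T (ks j) ∘ fun y : {Q // Q ∈ (πs j).parts} → X =>
        fun i : Fin 2 => y ⟨(πs j).part i, (πs j).part_mem.2 (Finset.mem_univ i)⟩)
          ⁻¹' Rect A B) = univ.pi C := by
      ext y
      simp only [mem_preimage, Function.comp_apply, hRectdef, mem_setOf_eq, mem_pi, mem_univ,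
        true_implies]
      constructor
      · rintro ⟨hA', hB'⟩ q
        rcases hqall q with rfl | rfl
        · rw [hC]
          simp only [if_pos rfl]
          exact hA'
        · rw [hC]
          simp only [if_neg (fun hh : q1 = q0 => hqne hh.symm)]
          exact hB'
      · intro h
        constructor
        · have h' := h q0
          rw [hC] at h'
          simp only [if_pos rfl] at h'
          exact h'
        · have h' := h q1
          rw [hC] at h'
          simp only [if_neg (fun hh : q1 = q0 => hqne hh.symm)] at h'
          exact h'
    rw [hpre, Measure.pi_pi]
    have huniv : (Finset.univ : Finset {Q // Q ∈ (πs j).parts}) = {q0, q1} := by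
      ext q
      simp only [Finset.mem_univ, true_iff, Finset.mem_insert, Finset.mem_singleton]
      exact hqall q
    rw [huniv, Finset.prod_pair hqne, hC]
    simp only [if_pos rfl, if_neg (fun hh : q1 = q0 => hqne hh.symm), if_true]
    rw [(mp_permZpow T hTmeas hTmeas' hT (ks j 0)).measure_preimage hA.nullMeasurableSet,
      (mp_permZpow T hTmeas hTmeas' hT (ks j 1)).measure_preimage hB.nullMeasurableSet]
  set c0 : ℝ≥0∞ := ∑' j, c j with hc0def
  have hσ₂rect' : ∀ A B : Set X, MeasurableSet A → MeasurableSet B →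
      ∫⁻ ω, G ω A * G ω B ∂P = c0 * (μ A * μ B) := by
    intro A B hA hB
    rw [← hσ₂rect A B hA hB, hσ₂sum _ (hRectmeas A B hA hB), hc0def,
      ← ENNReal.tsum_mul_right]
    refine tsum_congr fun j => ?_
    rcases eq_or_ne (c j) 0 with h | h
    · rw [h, zero_mul, zero_mul]
    · rcases finpart2 (πs j) with heq | ⟨h0, h1⟩
      · exact absurd (hckill j heq) h
      · rw [hpair j A B hA hB h0 h1]
  obtain ⟨n₀, hn₀⟩ : ∃ n, 0 < μ (D n) := by
    by_contra hcon
    push_neg at hcon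
    have hsum0 : ∑' n, μ (D n) = 0 :=
      ENNReal.tsum_eq_zero.mpr fun n => nonpos_iff_eq_zero.mp (hcon n)
    have h2 := measure_iUnion_le (μ := μ) D
    rw [hDunion, hμinf, hsum0] at h2
    exact absurd h2 (by simp)
  have hA₀meas : MeasurableSet (D n₀) := hDmeas n₀
  set A₀ : Set X := D n₀ with hA₀def
  set m₀ : ℝ≥0∞ := μ A₀ with hm₀def
  have hm₀0 : m₀ ≠ 0 := hn₀.ne'
  have hm₀top : m₀ ≠ ⊤ := (hμbdd _ (hDbdd n₀)).ne
  have hc0top : c0 ≠ ⊤ := by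
    intro hc
    have hlt : ∫⁻ ω, G ω A₀ * G ω A₀ ∂P < ⊤ := by
      rw [lintegral_congr fun ω => (pow_two (G ω A₀)).symm]
      exact hsq A₀ (hDbdd n₀) hA₀meas
    rw [hσ₂rect' A₀ A₀ hA₀meas hA₀meas, hc,
      ENNReal.top_mul (mul_ne_zero hm₀0 hm₀0)] at hlt
    exact absurd hlt (lt_irrefl ⊤)
  have hdagger : ∀ s : Set X, MeasurableSet s → μ s ≠ ⊤ →
      (fun ω => m₀ * G ω s) =ᵐ[P] fun ω => μ s * G ω A₀ := by
    intro s hs hstop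
    have hmeasGs : Measurable fun ω => G ω s := (Measure.measurable_coe hs).comp hGmeas
    have hmeasGA : Measurable fun ω => G ω A₀ := (Measure.measurable_coe hA₀meas).comp hGmeas
    refine ae_eq_of_moments (hmeasGs.const_mul m₀) (hmeasGA.const_mul (μ s))
      (v := c0 * (m₀ * m₀ * (μ s * μ s))) ?_ ?_ ?_ ?_
    · exact ENNReal.mul_ne_top hc0top (ENNReal.mul_ne_top
        (ENNReal.mul_ne_top hm₀top hm₀top) (ENNReal.mul_ne_top hstop hstop))
    · have hpt : ∀ ω, (m₀ * G ω s)^2 = (m₀*m₀) * (G ω s * G ω s) := fun ω => by ring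
      rw [lintegral_congr hpt, lintegral_const_mul _ (show Measurable fun ω => G ω s * G ω s from hmeasGs.mul hmeasGs),
        hσ₂rect' s s hs hs]
      ring
    · have hpt : ∀ ω, (μ s * G ω A₀)^2 = (μ s * μ s) * (G ω A₀ * G ω A₀) := fun ω => by ring
      rw [lintegral_congr hpt, lintegral_const_mul _ (show Measurable fun ω => G ω A₀ * G ω A₀ from hmeasGA.mul hmeasGA),
        hσ₂rect' A₀ A₀ hA₀meas hA₀meas]
      ring
    · have hpt : ∀ ω, (m₀ * G ω s) * (μ s * G ω A₀) = (m₀ * μ s) * (G ω s * G ω A₀) :=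
        fun ω => by ring
      rw [lintegral_congr hpt, lintegral_const_mul _ (show Measurable fun ω => G ω s * G ω A₀ from hmeasGs.mul hmeasGA),
        hσ₂rect' s A₀ hs hA₀meas]
      ring
  have hZmeas : Measurable fun ω => G ω A₀ := (Measure.measurable_coe hA₀meas).comp hGmeas
  have hZS : (fun ω => G ω A₀) ∘ ⇑S =ᵐ[P] fun ω => G ω A₀ := by
    have hA₁meas : MeasurableSet (⇑T ⁻¹' A₀) := hTmeas hA₀meas
    have hμA₁ : μ (⇑T ⁻¹' A₀) = m₀ := hT.measure_preimage hA₀meas.nullMeasurableSet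
    have hd := hdagger (⇑T ⁻¹' A₀) hA₁meas (by rw [hμA₁]; exact hm₀top)
    filter_upwards [N.equivariant', hd] with ω he hdd
    have h1 : G (S ω) A₀ = G ω (⇑T ⁻¹' A₀) := by
      show N.toFun (S ω) A₀ = _
      rw [he, Measure.map_apply hTmeas hA₀meas]
    show G (S ω) A₀ = G ω A₀
    rw [h1]
    rw [hμA₁] at hdd
    exact (ENNReal.mul_right_inj hm₀0 hm₀top).mp hdd
  obtain ⟨z₀, hz₀⟩ := hSerg.ae_eq_const_of_ae_eq_comp₀ hZmeas.nullMeasurable hZS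
  have hz₀top : z₀ ≠ ⊤ := by
    intro htop
    have hint : ∫⁻ ω, G ω A₀ * G ω A₀ ∂P ≠ ⊤ := by
      rw [hσ₂rect' A₀ A₀ hA₀meas hA₀meas]
      exact ENNReal.mul_ne_top hc0top (ENNReal.mul_ne_top hm₀top hm₀top)
    have hfin := ae_lt_top (show Measurable fun ω => G ω A₀ * G ω A₀ from hZmeas.mul hZmeas) hint
    obtain ⟨ω, h1, h2⟩ := (hz₀.and hfin).exists
    have h1' : G ω A₀ = z₀ := h1
    rw [h1', htop] at h2
    simp at h2
  set α' : ℝ≥0∞ := z₀ / m₀ with hα'def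
  have hα'top : α' ≠ ⊤ := by
    rw [hα'def]
    exact (ENNReal.div_lt_top hz₀top hm₀0).ne
  have hconst : ∀ s : Set X, MeasurableSet s → μ s ≠ ⊤ → ∀ᵐ ω ∂P, G ω s = α' * μ s := by
    intro s hs hstop
    filter_upwards [hdagger s hs hstop, hz₀] with ω hd hz
    have hz' : G ω A₀ = z₀ := hz
    rw [hz'] at hd
    refine (ENNReal.mul_right_inj hm₀0 hm₀top).mp ?_
    rw [hd, hα'def, ← mul_assoc, ENNReal.mul_div_cancel hm₀0 hm₀top, mul_comm]
  obtain ⟨D0, hD0c, hD0d⟩ := TopologicalSpace.exists_countable_dense X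
  set base : Set (Set X) := {b | ∃ d ∈ D0, ∃ n : ℕ, b = Metric.ball d (1/(n+1))} with hbasedef
  have hbasec : base.Countable := by
    have hsub : base ⊆ (fun p : X × ℕ => Metric.ball p.1 (1/(p.2+1))) ''
        (D0 ×ˢ (univ : Set ℕ)) := by
      rintro b ⟨d, hd, n, rfl⟩
      exact ⟨(d, n), ⟨hd, trivial⟩, rfl⟩
    exact ((hD0c.prod countable_univ).image _).mono hsub
  have hbase_open : ∀ b ∈ base, IsOpen b := by
    rintro b ⟨d, hd, n, rfl⟩
    exact Metric.isOpen_ball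
  have hbase_bdd : ∀ b ∈ base, IsBounded b := by
    rintro b ⟨d, hd, n, rfl⟩
    exact Metric.isBounded_ball
  set 𝒞 : Set (Set X) := {s | ∃ t : Set (Set X), t ⊆ base ∧ t.Finite ∧ t.Nonempty ∧ s = ⋂₀ t}
    with h𝒞def
  have hbase𝒞 : base ⊆ 𝒞 := by
    intro b hb
    exact ⟨{b}, singleton_subset_iff.mpr hb, finite_singleton b, singleton_nonempty b,
      (sInter_singleton b).symm⟩
  have h𝒞c : 𝒞.Countable := by
    have h1 : {t : Set (Set X) | t.Finite ∧ t ⊆ base}.Countable :=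
      Set.countable_setOf_finite_subset hbasec
    have h2 : 𝒞 ⊆ Set.sInter '' {t : Set (Set X) | t.Finite ∧ t ⊆ base} := by
      rintro s ⟨t, ht1, ht2, ht3, rfl⟩
      exact ⟨t, ⟨ht2, ht1⟩, rfl⟩
    exact ((h1.image _).mono h2)
  have h𝒞pi : IsPiSystem 𝒞 := by
    rintro s ⟨t, ht1, ht2, ht3, rfl⟩ u ⟨w, hw1, hw2, hw3, rfl⟩ _
    exact ⟨t ∪ w, union_subset ht1 hw1, ht2.union hw2, ht3.mono subset_union_left,
      (sInter_union t w).symm⟩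
  have h𝒞open : ∀ s ∈ 𝒞, IsOpen s := by
    rintro s ⟨t, ht1, ht2, ht3, rfl⟩
    exact Set.Finite.isOpen_sInter ht2 fun b hb => hbase_open b (ht1 hb)
  have h𝒞meas : ∀ s ∈ 𝒞, MeasurableSet s := fun s hs => (h𝒞open s hs).measurableSet
  have h𝒞bdd : ∀ s ∈ 𝒞, IsBounded s := by
    rintro s ⟨t, ht1, ht2, ⟨b, hb⟩, rfl⟩
    exact (hbase_bdd b (ht1 hb)).subset (sInter_subset_of_mem hb)
  have hbaseU : ⋃₀ base = univ := by
    apply eq_univ_of_forall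
    intro x
    obtain ⟨d, hd1, hd2⟩ := Metric.dense_iff.mp hD0d x 1 one_pos
    refine ⟨Metric.ball d (1/((0:ℕ)+1)), ⟨d, hd2, 0, rfl⟩, ?_⟩
    have h01 : (1:ℝ)/((0:ℕ)+1) = 1 := by norm_num
    rw [h01, Metric.mem_ball, dist_comm]
    exact Metric.mem_ball.mp hd1
  have hgen : (inferInstance : MeasurableSpace X) = MeasurableSpace.generateFrom 𝒞 := by
    refine le_antisymm ?_ (MeasurableSpace.generateFrom_le fun s hs => (h𝒞meas s hs))
    rw [‹BorelSpace X›.measurable_eq]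
    refine MeasurableSpace.generateFrom_le fun U hU => ?_
    have hU' : IsOpen U := hU
    have hUrep : U = ⋃₀ {b | b ∈ base ∧ b ⊆ U} := by
      apply Subset.antisymm
      · intro x hx
        obtain ⟨ε, hε, hball⟩ := Metric.isOpen_iff.mp hU' x hx
        obtain ⟨n, hn⟩ := exists_nat_one_div_lt (show (0:ℝ) < ε/2 by linarith)
        have hpos : (0:ℝ) < 1/(n+1) := by positivity
        obtain ⟨d, hd1, hd2⟩ := Metric.dense_iff.mp hD0d x (1/(n+1)) hpos
        refine ⟨Metric.ball d (1/(n+1)), ⟨⟨d, hd2, n, rfl⟩, ?_⟩, ?_⟩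
        · intro y hy
          apply hball
          rw [Metric.mem_ball]
          have hyd : dist y d < 1/(n+1) := Metric.mem_ball.mp hy
          have hdx : dist d x < 1/(n+1) := Metric.mem_ball.mp hd1
          calc dist y x ≤ dist y d + dist d x := dist_triangle y d x
            _ < 1/(n+1) + 1/(n+1) := by linarith
            _ < ε/2 + ε/2 := by linarith
            _ = ε := by ring
        · rw [Metric.mem_ball, dist_comm]
          exact Metric.mem_ball.mp hd1
      · rintro x ⟨b, ⟨hb1, hb2⟩, hxb⟩
        exact hb2 hxb
    rw [hUrep]
    refine MeasurableSet.sUnion (hbasec.mono fun b hb => hb.1) fun b hb => ?_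
    exact MeasurableSpace.measurableSet_generateFrom (hbase𝒞 hb.1)
  refine ⟨α'.toNNReal, ?_⟩
  have hαcoe : (α'.toNNReal : ℝ≥0∞) = α' := ENNReal.coe_toNNReal hα'top
  have hall : ∀ᵐ ω ∂P, ∀ s ∈ 𝒞, G ω s = α' * μ s := by
    rw [MeasureTheory.ae_ball_iff h𝒞c]
    intro s hs
    exact hconst s (h𝒞meas s hs) ((hμbdd s (h𝒞bdd s hs)).ne)
  filter_upwards [hall] with ω hω
  show G ω = (α'.toNNReal : ℝ≥0∞) • μ
  rw [hαcoe]
  refine Measure.ext_of_generateFrom_of_cover_subset hgen h𝒞pi hbase𝒞 hbasec hbaseU ?_ ?_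
  · intro s hsb
    rw [hω s (hbase𝒞 hsb)]
    exact ENNReal.mul_ne_top hα'top ((hμbdd s (hbase_bdd s hsb)).ne)
  · intro s hs
    rw [hω s hs, Measure.smul_apply, smul_eq_mul]





end PPP
end
end

section
/- Assume that T has the (P) property. If N is a T-random measure defined on some ergodic probability-preserving system (Ω,ℱ,ℙ,S) whose realizations are almost surely absolutely continuous with respect to μ, then there exists α ∈ [0,+∞] such that N is constant and almost surely equal to αμ (no moment hypothesis is required). -/
open MeasureTheory ENNReal NNReal Set Bornology

noncomputable section

namespace PPP

variable {X Y Ω : Type*} [MeasurableSpace X] [MeasurableSpace Y] [MeasurableSpace Ω]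

open ProbabilityTheory
set_option linter.unusedSectionVars false
set_option maxHeartbeats 1000000

lemma ennreal_mul_cancel {a b x : ℝ≥0∞} (hx0 : x ≠ 0) (hxt : x ≠ ⊤) (h : a * x = b * x) :
    a = b := by
  have h2 := congrArg (fun y => y * x⁻¹) h
  simpa [mul_assoc, ENNReal.mul_inv_cancel hx0 hxt] using h2

/-- `withDensity` is injective on measurable densities over a σ-finite measure. -/
lemma wd_inj {μ : Measure X} [SigmaFinite μ] {g g' : X → ℝ≥0∞} (hg : Measurable g)
    (hg' : Measurable g') (h : μ.withDensity g = μ.withDensity g') : g =ᵐ[μ] g' := by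
  have h1 := Measure.rnDeriv_withDensity μ hg
  have h2 := Measure.rnDeriv_withDensity μ hg'
  rw [h] at h1
  exact h1.symm.trans h2

lemma zpow_mp {μ : Measure X} (T : X ≃ X) (hTm : Measurable ⇑T)
    (hTm' : Measurable ⇑T.symm) (hT : MeasurePreserving ⇑T μ μ) (k : ℤ) :
    MeasurePreserving ⇑((T : Equiv.Perm X) ^ k) μ μ := by
  have hsymm : MeasurePreserving ⇑T.symm μ μ :=
    MeasurePreserving.symm (⟨T, hTm, hTm'⟩ : X ≃ᵐ X) hT
  induction k using Int.induction_on with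
  | zero => simpa using MeasurePreserving.id μ
  | succ n ih =>
      have h : ⇑((T : Equiv.Perm X) ^ ((n : ℤ) + 1))
          = ⇑((T : Equiv.Perm X) ^ (n : ℤ)) ∘ ⇑T := by
        funext x; rw [zpow_add_one]; rfl
      rw [h]; exact ih.comp hT
  | pred n ih =>
      have h : ⇑((T : Equiv.Perm X) ^ ((-n : ℤ) - 1))
          = ⇑((T : Equiv.Perm X) ^ (-n : ℤ)) ∘ ⇑T.symm := by
        funext x; rw [zpow_sub_one]; rfl
      rw [h]; exact ih.comp hsymm

lemma map_withDensity_equiv {μ : Measure X} (T : X ≃ X) (hTm : Measurable ⇑T)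
    (hTm' : Measurable ⇑T.symm) (hT : MeasurePreserving ⇑T μ μ) {g : X → ℝ≥0∞}
    (hg : Measurable g) :
    (μ.withDensity g).map ⇑T = μ.withDensity (fun x => g (T.symm x)) := by
  ext s hs
  rw [Measure.map_apply hTm hs, withDensity_apply _ (hTm hs), withDensity_apply _ hs]
  have h := hT.setLIntegral_comp_preimage hs (f := fun x => g (T.symm x)) (hg.comp hTm')
  simpa using h


lemma iUnion_ann [MetricSpace X] (x₀ : X) :
    ⋃ n : ℕ, (Metric.ball x₀ ((n : ℝ) + 1) \ Metric.ball x₀ n) = univ := by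
  ext x
  simp only [mem_iUnion, mem_univ, iff_true, mem_diff, Metric.mem_ball]
  refine ⟨⌊dist x x₀⌋₊, ?_, ?_⟩
  · exact_mod_cast Nat.lt_floor_add_one (dist x x₀)
  · exact not_lt.2 (Nat.floor_le dist_nonneg)

lemma ann_disj [MetricSpace X] (x₀ : X) :
    Pairwise (Function.onFun Disjoint
      (fun n : ℕ => Metric.ball x₀ ((n : ℝ) + 1) \ Metric.ball x₀ n)) := by
  intro n m hnm
  wlog h : n < m generalizing n m
  · exact (this hnm.symm (by omega)).symm
  refine Set.disjoint_left.2 fun x hx hx' => ?_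
  have h1 : dist x x₀ < (n : ℝ) + 1 := by simpa [Metric.mem_ball] using hx.1
  have h2 : ¬ dist x x₀ < (m : ℝ) := by simpa [Metric.mem_ball] using hx'.2
  have h3 : ((n : ℝ) + 1) ≤ m := by exact_mod_cast h
  exact h2 (lt_of_lt_of_le h1 h3)

lemma sigmaFinite_of_balls [MetricSpace X] (x₀ : X) {μ : Measure X}
    (h : ∀ n : ℕ, μ (Metric.ball x₀ n) < ⊤) : SigmaFinite μ :=
  ⟨⟨⟨fun n => Metric.ball x₀ n, fun _ => trivial, fun n => h n, Metric.iUnion_ball_nat x₀⟩⟩⟩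

/-- Joint measurable density for a measurable family of boundedly finite measures. -/
lemma exists_jointDensity [MetricSpace X] [BorelSpace X] [SecondCountableTopology X]
    (x₀ : X) (μ : Measure X) (hμb : ∀ n : ℕ, μ (Metric.ball x₀ n) < ⊤)
    (N : Ω → Measure X) (hN : Measurable N) :
    ∃ f : Ω → X → ℝ≥0∞, Measurable (Function.uncurry f) ∧
      ∀ ω, (∀ n : ℕ, N ω (Metric.ball x₀ n) < ⊤) → N ω ≪ μ →
        N ω = μ.withDensity (f ω) := by
  classical
  haveI : MeasurableSpace.CountableOrCountablyGenerated Ω X := ⟨Or.inr inferInstance⟩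
  set B : ℕ → Set X := fun n => Metric.ball x₀ n with hB
  have hBm : ∀ n, MeasurableSet (B n) := fun n => Metric.isOpen_ball.measurableSet
  set G : Set Ω := {ω | ∀ n : ℕ, N ω (B n) < ⊤} with hG
  have hNB : ∀ n, Measurable fun ω => N ω (B n) :=
    fun n => (Measure.measurable_coe (hBm n)).comp hN
  have hGm : MeasurableSet G := by
    have h : G = ⋂ n : ℕ, (fun ω => N ω (B n)) ⁻¹' (Iio ⊤) := by
      ext ω; simp [hG, mem_iInter]
    rw [h]
    exact MeasurableSet.iInter fun n => (hNB n) measurableSet_Iio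
  set Nt : Ω → Measure X := G.piecewise N (fun _ => (0 : Measure X)) with hNt
  have hNtm : Measurable Nt := Measurable.piecewise hGm hN measurable_const
  have hNtB : ∀ ω n, Nt ω (B n) < ⊤ := by
    intro ω n
    by_cases hw : ω ∈ G
    · rw [hNt, Set.piecewise_eq_of_mem _ _ _ hw]; exact hw n
    · rw [hNt, Set.piecewise_eq_of_notMem _ _ _ hw]; simp
  have hNtBmeas : ∀ n, Measurable fun ω => Nt ω (B n) :=
    fun n => (Measure.measurable_coe (hBm n)).comp hNtm
  have hκmeas : ∀ n : ℕ, Measurable fun ω => (Nt ω (B n))⁻¹ • (Nt ω).restrict (B n) := by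
    intro n
    apply Measure.measurable_of_measurable_coe
    intro s hs
    simp only [Measure.smul_apply, Measure.restrict_apply hs, smul_eq_mul]
    exact ((hNtBmeas n).inv).mul (((Measure.measurable_coe (hs.inter (hBm n))).comp hNtm))
  set κ : ℕ → Kernel Ω X := fun n =>
    ⟨fun ω => (Nt ω (B n))⁻¹ • (Nt ω).restrict (B n), hκmeas n⟩ with hκ
  set η : ℕ → Kernel Ω X := fun n =>
    Kernel.const Ω ((μ (B n))⁻¹ • μ.restrict (B n)) with hη
  have hκval : ∀ n ω, κ n ω = (Nt ω (B n))⁻¹ • (Nt ω).restrict (B n) := fun n ω => rfl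
  have hηval : ∀ n ω, η n ω = (μ (B n))⁻¹ • μ.restrict (B n) := fun n ω => rfl
  have massle : ∀ (ξ : Measure X) (s : Set X), ξ s ≠ ⊤ → ((ξ s)⁻¹ • ξ.restrict s) univ ≤ 1 := by
    intro ξ s hfin
    rw [Measure.smul_apply, Measure.restrict_apply MeasurableSet.univ, Set.univ_inter,
      smul_eq_mul]
    rcases eq_or_ne (ξ s) 0 with h0 | h0
    · simp [h0]
    · rw [ENNReal.inv_mul_cancel h0 hfin]
  have hκfin : ∀ n, IsFiniteKernel (κ n) := by
    intro n
    exact ⟨1, one_lt_top, fun ω => massle (Nt ω) (B n) (hNtB ω n).ne⟩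
  have hηfin : ∀ n, IsFiniteKernel (η n) := by
    intro n
    exact ⟨1, one_lt_top, fun ω => massle μ (B n) (hμb n).ne⟩
  set q : ℕ → Ω → X → ℝ≥0∞ := fun n ω x =>
    Nt ω (B n) * (μ (B n))⁻¹ * Kernel.rnDeriv (κ n) (η n) ω x with hq
  have hqm : ∀ n, Measurable (Function.uncurry (q n)) := by
    intro n
    haveI := hκfin n; haveI := hηfin n
    apply Measurable.mul
    · exact (((hNtBmeas n).comp measurable_fst).mul measurable_const)
    · exact Kernel.measurable_rnDeriv (κ n) (η n)
  -- the key per-ball identity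
  have key : ∀ ω, ω ∈ G → N ω ≪ μ → ∀ (n : ℕ) (A : Set X), MeasurableSet A → A ⊆ B n →
      N ω A = ∫⁻ x in A, q n ω x ∂μ := by
    intro ω hw hac n A hA hAB
    haveI := hκfin n; haveI := hηfin n
    have hNtN : Nt ω = N ω := Set.piecewise_eq_of_mem _ _ _ hw
    rcases eq_or_ne (μ (B n)) 0 with hμ0 | hμ0
    · have hA0 : μ A = 0 := measure_mono_null hAB hμ0
      rw [hac hA0, setLIntegral_measure_zero _ _ hA0]
    rcases eq_or_ne (N ω (B n)) 0 with hN0 | hN0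
    · have h1 : N ω A = 0 := measure_mono_null hAB hN0
      have h2 : ∀ x, q n ω x = 0 := by
        intro x; rw [hq]; simp only [hNtN, hN0, zero_mul]
      rw [h1]
      simp only [h2]
      simp
    -- main case
    have hNfin : N ω (B n) ≠ ⊤ := (hw n).ne
    have hacn : κ n ω ≪ η n ω := by
      rw [hκval, hηval, hNtN]
      intro s hs
      rw [Measure.smul_apply, smul_eq_mul] at hs ⊢
      have hμs : μ (s ∩ B n) = 0 := by
        rcases mul_eq_zero.1 hs with h | h
        · exact absurd h (by simp only [ne_eq, ENNReal.inv_eq_zero]; exact (hμb n).ne)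
        · rwa [Measure.restrict_apply₀' (hBm n).nullMeasurableSet] at h
      rw [Measure.restrict_apply₀' (hBm n).nullMeasurableSet, hac hμs, mul_zero]
    have hrec := Kernel.withDensity_rnDeriv_eq hacn
    have hDmeas : Measurable fun x => Kernel.rnDeriv (κ n) (η n) ω x :=
      Kernel.measurable_rnDeriv_right _ _ ω
    have heq := congrArg (fun m : Measure X => m A) hrec
    have hlhs : Kernel.withDensity (η n) (Kernel.rnDeriv (κ n) (η n)) ω A
        = (μ (B n))⁻¹ * ∫⁻ x in A, Kernel.rnDeriv (κ n) (η n) ω x ∂μ := by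
      rw [Kernel.withDensity_apply _ (Kernel.measurable_rnDeriv _ _)]
      rw [hηval]
      rw [withDensity_apply _ hA]
      rw [Measure.restrict_smul]
      rw [lintegral_smul_measure]
      rw [Measure.restrict_restrict hA, Set.inter_eq_self_of_subset_left hAB, smul_eq_mul]
    have hrhs : κ n ω A = (N ω (B n))⁻¹ * N ω A := by
      rw [hκval, hNtN, Measure.smul_apply, Measure.restrict_apply hA,
        Set.inter_eq_self_of_subset_left hAB, smul_eq_mul]
    rw [hlhs, hrhs] at heq
    rw [hq]
    simp only [hNtN]
    rw [lintegral_const_mul _ hDmeas]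
    calc N ω A = (N ω (B n) * (N ω (B n))⁻¹) * N ω A := by
          rw [ENNReal.mul_inv_cancel hN0 hNfin, one_mul]
      _ = N ω (B n) * ((N ω (B n))⁻¹ * N ω A) := by ring
      _ = N ω (B n) * ((μ (B n))⁻¹ * ∫⁻ x in A, Kernel.rnDeriv (κ n) (η n) ω x ∂μ) := by
          rw [heq]
      _ = N ω (B n) * (μ (B n))⁻¹ * ∫⁻ x in A, Kernel.rnDeriv (κ n) (η n) ω x ∂μ := by
          ring
  -- assemble the global density
  set ann : ℕ → Set X := fun n => Metric.ball x₀ ((n : ℝ) + 1) \ Metric.ball x₀ n with hann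
  have hannm : ∀ n, MeasurableSet (ann n) :=
    fun n => Metric.isOpen_ball.measurableSet.diff Metric.isOpen_ball.measurableSet
  have hannB : ∀ n, ann n ⊆ B (n + 1) := by
    intro n x hx
    have h1 : dist x x₀ < (n : ℝ) + 1 := by simpa [hann, Metric.mem_ball] using hx.1
    have : ((n : ℝ) + 1) = ((n + 1 : ℕ) : ℝ) := by push_cast; ring
    simpa [hB, Metric.mem_ball, ← this] using h1
  refine ⟨fun ω x => ∑' n : ℕ, (ann n).indicator (q (n + 1) ω) x, ?_, ?_⟩
  · apply Measurable.ennreal_tsum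
    intro n
    have h : (fun p : Ω × X => (ann n).indicator (q (n + 1) p.1) p.2)
        = (Prod.snd ⁻¹' (ann n)).indicator (Function.uncurry (q (n + 1))) := by
      ext p
      by_cases h : p.2 ∈ ann n <;> simp [Set.indicator, h, Function.uncurry]
    exact h ▸ (Measurable.indicator (hqm (n + 1)) (measurable_snd (hannm n)))
  · intro ω hw hac
    ext s hs
    rw [withDensity_apply _ hs]
    refine Eq.symm ?_
    have hterm : ∀ n : ℕ, ∫⁻ x in s, (ann n).indicator (q (n + 1) ω) x ∂μ
        = N ω (ann n ∩ s) := by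
      intro n
      rw [lintegral_indicator (hannm n), Measure.restrict_restrict (hannm n)]
      exact (key ω hw hac (n + 1) (ann n ∩ s) ((hannm n).inter hs)
        ((Set.inter_subset_left).trans (hannB n))).symm
    calc ∫⁻ x in s, (∑' n : ℕ, (ann n).indicator (q (n + 1) ω) x) ∂μ
        = ∑' n : ℕ, ∫⁻ x in s, (ann n).indicator (q (n + 1) ω) x ∂μ := by
          apply lintegral_tsum
          intro n
          exact (Measurable.indicator ((hqm (n + 1)).of_uncurry_left)
            (hannm n)).aemeasurable
      _ = ∑' n : ℕ, N ω (ann n ∩ s) := by simp only [hterm]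
      _ = N ω (⋃ n : ℕ, ann n ∩ s) := by
          refine (measure_iUnion ?_ (fun n => (hannm n).inter hs)).symm
          intro n m hnm
          exact (ann_disj x₀ hnm).mono Set.inter_subset_left Set.inter_subset_left
      _ = N ω s := by rw [← Set.iUnion_inter, hann, iUnion_ann, Set.univ_inter]


lemma finpartition_fin_two (π : Finpartition (Finset.univ : Finset (Fin 2))) :
    π.parts = {Finset.univ} ∨ π.parts = {{0}, {1}} := by
  classical
  have h0 : (0 : Fin 2) ∈ (Finset.univ : Finset (Fin 2)) := Finset.mem_univ _
  have h1 : (1 : Fin 2) ∈ (Finset.univ : Finset (Fin 2)) := Finset.mem_univ _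
  by_cases h : π.part 0 = π.part 1
  · left
    have huniv : π.part 0 = Finset.univ := by
      apply Finset.eq_univ_iff_forall.2
      intro i
      fin_cases i
      · exact π.mem_part h0
      · rw [h]; exact π.mem_part h1
    ext Q
    simp only [Finset.mem_singleton]
    constructor
    · intro hQ
      obtain ⟨x, hx⟩ := π.nonempty_of_mem_parts hQ
      have : π.part x = Q := π.part_eq_of_mem hQ hx
      rw [← this]
      have : π.part x = π.part 0 := by
        fin_cases x
        · rfl
        · exact h.symm
      rw [this, huniv]
    · intro hQ
      rw [hQ]
      have hm := π.part_mem.2 h0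
      rwa [huniv] at hm
  · right
    have hd : Disjoint (π.part 0) (π.part 1) :=
      π.disjoint (π.part_mem.2 h0) (π.part_mem.2 h1) h
    have hp0 : π.part 0 = {0} := by
      have hne : (1 : Fin 2) ∉ π.part 0 := fun hi =>
        (Finset.disjoint_left.1 hd hi (π.mem_part h1))
      ext i
      fin_cases i
      · simpa using π.mem_part h0
      · simp only [Finset.mem_singleton]
        exact iff_of_false hne (by decide)
    have hp1 : π.part 1 = {1} := by
      have hne : (0 : Fin 2) ∉ π.part 1 := fun hi =>
        (Finset.disjoint_left.1 hd (π.mem_part h0) hi)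
      ext i
      fin_cases i
      · simp only [Finset.mem_singleton]
        exact iff_of_false hne (by decide)
      · simpa using π.mem_part h1
    ext Q
    simp only [Finset.mem_insert, Finset.mem_singleton]
    constructor
    · intro hQ
      obtain ⟨x, hx⟩ := π.nonempty_of_mem_parts hQ
      have hQx : π.part x = Q := π.part_eq_of_mem hQ hx
      have hx2 : x = 0 ∨ x = 1 := by fin_cases x <;> simp
      rcases hx2 with rfl | rfl
      · left; rw [← hQx, hp0]
      · right; rw [← hQx, hp1]
    · rintro (rfl | rfl)
      · rw [← hp0]; exact π.part_mem.2 h0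
      · rw [← hp1]; exact π.part_mem.2 h1

lemma mPartMeasure_product {μ : Measure X} [SigmaFinite μ]
    (π : Finpartition (Finset.univ : Finset (Fin 2)))
    (hπ : π.parts = {{0}, {1}}) :
    mPartMeasure μ π = Measure.pi (fun _ : Fin 2 => μ) := by
  classical
  have h0 : (0 : Fin 2) ∈ (Finset.univ : Finset (Fin 2)) := Finset.mem_univ _
  have h1 : (1 : Fin 2) ∈ (Finset.univ : Finset (Fin 2)) := Finset.mem_univ _
  have hp0 : π.part 0 = {0} := π.part_eq_of_mem (by rw [hπ]; simp) (by simp)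
  have hp1 : π.part 1 = {1} := π.part_eq_of_mem (by rw [hπ]; simp) (by simp)
  set g : Fin 2 → {Q // Q ∈ π.parts} :=
    fun i => ⟨π.part i, π.part_mem.2 (Finset.mem_univ i)⟩ with hg
  have hginj : Function.Injective g := by
    intro i j hij
    have := congrArg Subtype.val hij
    fin_cases i <;> fin_cases j <;> simp_all [hp0, hp1]
  have hgsurj : Function.Surjective g := by
    rintro ⟨Q, hQ⟩
    rw [hπ] at hQ
    simp only [Finset.mem_insert, Finset.mem_singleton] at hQ
    rcases hQ with rfl | rfl
    · exact ⟨0, by simp [hg, hp0]⟩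
    · exact ⟨1, by simp [hg, hp1]⟩
  set e : Fin 2 ≃ {Q // Q ∈ π.parts} := Equiv.ofBijective g ⟨hginj, hgsurj⟩ with he
  have hmeas : Measurable (fun y : {Q // Q ∈ π.parts} → X => fun i : Fin 2 => y (g i)) :=
    measurable_pi_lambda _ fun i => measurable_pi_apply _
  refine (Measure.pi_eq fun s hs => ?_).symm
  rw [mPartMeasure]
  have hpre : (fun y : {Q // Q ∈ π.parts} → X => fun i : Fin 2 => y (g i)) ⁻¹' (Set.pi univ s)
      = Set.pi univ (fun Q => s (e.symm Q)) := by
    ext y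
    simp only [Set.mem_preimage, Set.mem_pi, Set.mem_univ, forall_true_left, true_implies]
    constructor
    · intro hy Q
      have := hy (e.symm Q)
      rwa [show g (e.symm Q) = Q from e.apply_symm_apply Q] at this
    · intro hy i
      have := hy (g i)
      rwa [show e.symm (g i) = i from e.symm_apply_apply i] at this
  rw [Measure.map_apply hmeas (MeasurableSet.univ_pi hs), hpre, Measure.pi_pi]
  exact Equiv.prod_comp e.symm (fun i => μ (s i))

lemma mPartMeasure_diag_map_top {μ : Measure X} [SigmaFinite μ] (hμinf : μ univ = ⊤)
    (T : X ≃ X) (hTm : Measurable ⇑T) (hTm' : Measurable ⇑T.symm)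
    [MetricSpace X] [BorelSpace X] [SecondCountableTopology X]
    (π : Finpartition (Finset.univ : Finset (Fin 2)))
    (hπ : π.parts = {Finset.univ}) (k : Fin 2 → ℤ) :
    Measure.map (zpowPiMap T k) (mPartMeasure μ π)
      {x : Fin 2 → X | x 1 = ((T : Equiv.Perm X) ^ (k 1 - k 0)) (x 0)} = ⊤ := by
  classical
  have hzm : ∀ j : ℤ, Measurable ⇑((T : Equiv.Perm X) ^ j) := by
    intro j
    induction j using Int.induction_on with
    | zero => simpa using measurable_id
    | succ n ih =>
        have h : ⇑((T : Equiv.Perm X) ^ ((n : ℤ) + 1))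
            = ⇑((T : Equiv.Perm X) ^ (n : ℤ)) ∘ ⇑T := by
          funext x; rw [zpow_add_one]; rfl
        rw [h]; exact ih.comp hTm
    | pred n ih =>
        have h : ⇑((T : Equiv.Perm X) ^ ((-n : ℤ) - 1))
            = ⇑((T : Equiv.Perm X) ^ (-n : ℤ)) ∘ ⇑T.symm := by
          funext x; rw [zpow_sub_one]; rfl
        rw [h]; exact ih.comp hTm'
  have hzpm : Measurable (zpowPiMap T k) :=
    measurable_pi_lambda _ fun i => (hzm (k i)).comp (measurable_pi_apply i)
  have hDm : MeasurableSet {x : Fin 2 → X | x 1 = ((T : Equiv.Perm X) ^ (k 1 - k 0)) (x 0)} :=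
    StronglyMeasurable.measurableSet_eq_fun
      (measurable_pi_apply 1).stronglyMeasurable
      (show Measurable fun x : Fin 2 → X => ((T : Equiv.Perm X) ^ (k 1 - k 0)) (x 0) from
        (hzm _).comp (measurable_pi_apply 0)).stronglyMeasurable
  have hψm : Measurable (fun y : {Q // Q ∈ π.parts} → X =>
      fun i : Fin 2 => y ⟨π.part i, π.part_mem.2 (Finset.mem_univ i)⟩) :=
    measurable_pi_lambda _ fun i => measurable_pi_apply _
  rw [Measure.map_apply hzpm hDm]
  rw [mPartMeasure]
  rw [Measure.map_apply hψm (hzpm hDm)]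
  have hq : (⟨π.part 0, π.part_mem.2 (Finset.mem_univ 0)⟩ : {Q // Q ∈ π.parts})
      = ⟨π.part 1, π.part_mem.2 (Finset.mem_univ 1)⟩ := by
    apply Subtype.ext
    have hu0 : π.part 0 ∈ ({Finset.univ} : Finset (Finset (Fin 2))) := by
      rw [← hπ]; exact π.part_mem.2 (Finset.mem_univ _)
    have hu1 : π.part 1 ∈ ({Finset.univ} : Finset (Finset (Fin 2))) := by
      rw [← hπ]; exact π.part_mem.2 (Finset.mem_univ _)
    simp only [Finset.mem_singleton] at hu0 hu1
    exact hu0.trans hu1.symm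
  have hpre : (fun y : {Q // Q ∈ π.parts} → X =>
        fun i : Fin 2 => y ⟨π.part i, π.part_mem.2 (Finset.mem_univ i)⟩) ⁻¹'
      (zpowPiMap T k ⁻¹' {x : Fin 2 → X | x 1 = ((T : Equiv.Perm X) ^ (k 1 - k 0)) (x 0)})
      = univ := by
    ext y
    simp only [Set.mem_preimage, Set.mem_setOf_eq, Set.mem_univ, iff_true, zpowPiMap]
    rw [← hq]
    set z := y ⟨π.part 0, π.part_mem.2 (Finset.mem_univ 0)⟩
    have : ((T : Equiv.Perm X) ^ (k 1 - k 0)) (((T : Equiv.Perm X) ^ (k 0)) z)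
        = ((T : Equiv.Perm X) ^ (k 1 - k 0) * (T : Equiv.Perm X) ^ (k 0)) z := rfl
    rw [this, ← zpow_add, sub_add_cancel]
  rw [hpre, Measure.pi_univ]
  haveI : Nonempty {Q // Q ∈ π.parts} :=
    ⟨⟨Finset.univ, by rw [hπ]; exact Finset.mem_singleton_self _⟩⟩
  simp only [hμinf]
  rw [Finset.prod_const]
  apply ENNReal.top_pow
  simp only [Finset.card_univ, Fintype.card_coe]
  exact Finset.card_ne_zero.mpr
    ⟨Finset.univ, by rw [hπ]; exact Finset.mem_singleton_self _⟩

lemma pi_two_graph_null {μ : Measure X} [SigmaFinite μ] (hμcont : ∀ x : X, μ {x} = 0)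
    [MetricSpace X] [BorelSpace X] [SecondCountableTopology X]
    {F : X → X} (hF : Measurable F) :
    (Measure.pi fun _ : Fin 2 => μ) {x : Fin 2 → X | x 1 = F (x 0)} = 0 := by
  have hmp := measurePreserving_finTwoArrow (α := X) μ
  have hD'm : MeasurableSet {p : X × X | p.2 = F p.1} :=
    StronglyMeasurable.measurableSet_eq_fun measurable_snd.stronglyMeasurable
      (show Measurable fun p : X × X => F p.1 from hF.comp measurable_fst).stronglyMeasurable
  have hpre : {x : Fin 2 → X | x 1 = F (x 0)}
      = MeasurableEquiv.finTwoArrow ⁻¹' {p : X × X | p.2 = F p.1} := by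
    ext x; simp [MeasurableEquiv.finTwoArrow]
  rw [hpre, ← Measure.map_apply (MeasurableEquiv.measurable _) hD'm, hmp.map_eq]
  rw [Measure.prod_apply hD'm]
  have h0 : (fun x => μ (Prod.mk x ⁻¹' {p : X × X | p.2 = F p.1})) = fun _ => (0 : ℝ≥0∞) := by
    funext x
    have h : (Prod.mk x ⁻¹' {p : X × X | p.2 = F p.1}) = {F x} := by
      ext y; simp [eq_comm]
    rw [h]; exact hμcont (F x)
  rw [h0, lintegral_zero]


lemma ae_eq_of_second_moments {P : Measure Ω} [IsProbabilityMeasure P]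
    {a b : Ω → ℝ≥0∞} (ham : Measurable a) (hbm : Measurable b)
    {M : ℝ≥0∞} (hM : M ≠ ⊤) (ha : ∀ ω, a ω ≤ M) (hb : ∀ ω, b ω ≤ M)
    {K : ℝ≥0∞}
    (haa : ∫⁻ ω, a ω * a ω ∂P = K) (hbb : ∫⁻ ω, b ω * b ω ∂P = K)
    (hab : ∫⁻ ω, a ω * b ω ∂P = K) :
    a =ᵐ[P] b := by
  have haM : ∀ ω, a ω ≠ ⊤ := fun ω => (lt_of_le_of_lt (ha ω) (lt_top_iff_ne_top.2 hM)).ne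
  have hbM : ∀ ω, b ω ≠ ⊤ := fun ω => (lt_of_le_of_lt (hb ω) (lt_top_iff_ne_top.2 hM)).ne
  set ra : Ω → ℝ := fun ω => (a ω).toReal with hra
  set rb : Ω → ℝ := fun ω => (b ω).toReal with hrb
  have hram : Measurable ra := ham.ennreal_toReal
  have hrbm : Measurable rb := hbm.ennreal_toReal
  have hbound : ∀ (f : Ω → ℝ≥0∞), (∀ ω, f ω ≤ M) → ∀ ω, |(f ω).toReal| ≤ M.toReal := by
    intro f hf ω
    rw [abs_of_nonneg ENNReal.toReal_nonneg]
    exact ENNReal.toReal_mono hM (hf ω)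
  have hint : ∀ (f : Ω → ℝ), Measurable f → ∀ C : ℝ, (∀ ω, |f ω| ≤ C) → Integrable f P := by
    intro f hf C hC
    exact (integrable_const C).mono' hf.aestronglyMeasurable (ae_of_all _ hC)
  -- convert second moments to real integrals
  have hprod : ∀ (u v : Ω → ℝ≥0∞), Measurable u → Measurable v → (∀ ω, u ω ≤ M) →
      (∀ ω, v ω ≤ M) → ∫ ω, (u ω).toReal * (v ω).toReal ∂P = (∫⁻ ω, u ω * v ω ∂P).toReal := by
    intro u v hu hv huM hvM
    have h1 : ∀ ω, (u ω).toReal * (v ω).toReal = ((u ω) * (v ω)).toReal := by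
      intro ω; rw [ENNReal.toReal_mul]
    simp only [h1]
    apply integral_toReal ((hu.mul hv).aemeasurable)
    apply ae_of_all
    intro ω
    exact lt_of_le_of_lt (mul_le_mul' (huM ω) (hvM ω))
      (ENNReal.mul_lt_top (lt_top_iff_ne_top.2 hM) (lt_top_iff_ne_top.2 hM))
  have hKt : (K : ℝ≥0∞) ≠ ⊤ := by
    rw [← haa]
    refine (lt_of_le_of_lt (lintegral_mono fun ω => mul_le_mul' (ha ω) (ha ω)) ?_).ne
    calc ∫⁻ _, M * M ∂P = M * M := by simp [measure_univ]
      _ < ⊤ := ENNReal.mul_lt_top hM.lt_top hM.lt_top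
  have hIaa : ∫ ω, ra ω * ra ω ∂P = K.toReal := by
    rw [hprod a a ham ham ha ha, haa]
  have hIbb : ∫ ω, rb ω * rb ω ∂P = K.toReal := by
    rw [hprod b b hbm hbm hb hb, hbb]
  have hIab : ∫ ω, ra ω * rb ω ∂P = K.toReal := by
    rw [hprod a b ham hbm ha hb, hab]
  have hintaa : Integrable (fun ω => ra ω * ra ω) P := by
    apply hint _ (hram.mul hram) (M.toReal * M.toReal)
    intro ω
    rw [Pi.mul_apply, abs_mul]
    exact mul_le_mul (hbound a ha ω) (hbound a ha ω) (abs_nonneg _) ENNReal.toReal_nonneg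
  have hintbb : Integrable (fun ω => rb ω * rb ω) P := by
    apply hint _ (hrbm.mul hrbm) (M.toReal * M.toReal)
    intro ω
    rw [Pi.mul_apply, abs_mul]
    exact mul_le_mul (hbound b hb ω) (hbound b hb ω) (abs_nonneg _) ENNReal.toReal_nonneg
  have hintab : Integrable (fun ω => ra ω * rb ω) P := by
    apply hint _ (hram.mul hrbm) (M.toReal * M.toReal)
    intro ω
    rw [Pi.mul_apply, abs_mul]
    exact mul_le_mul (hbound a ha ω) (hbound b hb ω) (abs_nonneg _) ENNReal.toReal_nonneg
  have hdd : ∀ ω, (ra ω - rb ω) * (ra ω - rb ω)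
      = ra ω * ra ω + rb ω * rb ω - 2 * (ra ω * rb ω) := by
    intro ω; ring
  have hIdd : ∫ ω, (ra ω - rb ω) * (ra ω - rb ω) ∂P = 0 := by
    calc ∫ ω, (ra ω - rb ω) * (ra ω - rb ω) ∂P
        = ∫ ω, (ra ω * ra ω + rb ω * rb ω - 2 * (ra ω * rb ω)) ∂P := by
          simp only [hdd]
      _ = (∫ ω, (ra ω * ra ω + rb ω * rb ω) ∂P) - ∫ ω, 2 * (ra ω * rb ω) ∂P := by
          exact integral_sub (hintaa.add hintbb) (hintab.const_mul 2)
      _ = (∫ ω, ra ω * ra ω ∂P) + (∫ ω, rb ω * rb ω ∂P) - 2 * ∫ ω, ra ω * rb ω ∂P := by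
          rw [integral_add hintaa hintbb, integral_const_mul]
      _ = K.toReal + K.toReal - 2 * K.toReal := by rw [hIaa, hIbb, hIab]
      _ = 0 := by ring
  have hddint : Integrable (fun ω => (ra ω - rb ω) * (ra ω - rb ω)) P := by
    have h : (fun ω => (ra ω - rb ω) * (ra ω - rb ω))
        = fun ω => ra ω * ra ω + rb ω * rb ω - 2 * (ra ω * rb ω) := funext hdd
    rw [h]
    exact (hintaa.add hintbb).sub (hintab.const_mul 2)
  have hdd0 : (fun ω => (ra ω - rb ω) * (ra ω - rb ω)) =ᵐ[P] 0 :=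
    (integral_eq_zero_iff_of_nonneg (fun ω => mul_self_nonneg _) hddint).mp hIdd
  filter_upwards [hdd0] with ω hω
  have hsub : ra ω - rb ω = 0 := by simpa [mul_self_eq_zero] using hω
  have hxy : ra ω = rb ω := by linarith
  have := (ENNReal.toReal_eq_toReal_iff' (haM ω) (hbM ω)).mp hxy
  exact this


lemma exists_pi_system [MetricSpace X] [BorelSpace X] [SecondCountableTopology X]
    (x₀ : X) :
    ∃ D : Set (Set X), D.Countable ∧ IsPiSystem D ∧
      (‹MeasurableSpace X› : MeasurableSpace X) = MeasurableSpace.generateFrom D ∧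
      (∀ s ∈ D, MeasurableSet s) ∧
      (∀ s ∈ D, ∃ n : ℕ, s ⊆ Metric.ball x₀ n) ∧
      (∀ n : ℕ, Metric.ball x₀ n ∈ D) := by
  classical
  obtain ⟨b, hbc, -, hbasis⟩ := TopologicalSpace.exists_countable_basis X
  set F : Set (Set X) :=
    (fun p : Set X × ℕ => p.1 ∩ Metric.ball x₀ p.2) '' ((insert univ b) ×ˢ univ) with hF
  have hFc : F.Countable := ((hbc.insert univ).prod countable_univ).image _
  have hFmem : ∀ u ∈ insert univ b, ∀ n : ℕ, u ∩ Metric.ball x₀ n ∈ F := by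
    intro u hu n
    exact ⟨(u, n), ⟨hu, mem_univ _⟩, rfl⟩
  have hFne : F.Nonempty := ⟨univ ∩ Metric.ball x₀ (0 : ℕ), hFmem univ (mem_insert _ _) 0⟩
  obtain ⟨e, he⟩ := Set.Countable.exists_eq_range hFc hFne
  have heF : ∀ i, e i ∈ F := fun i => he ▸ mem_range_self i
  have hFprop : ∀ s ∈ F, IsOpen s ∧ ∃ n : ℕ, s ⊆ Metric.ball x₀ n := by
    rintro s ⟨⟨u, n⟩, ⟨hu, -⟩, rfl⟩
    constructor
    · refine IsOpen.inter ?_ Metric.isOpen_ball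
      rcases mem_insert_iff.1 hu with rfl | hu
      · exact isOpen_univ
      · exact hbasis.isOpen hu
    · exact ⟨n, inter_subset_right⟩
  set D : Set (Set X) := {s | ∃ t : Finset ℕ, t.Nonempty ∧ s = ⋂ i ∈ t, e i} with hD
  have hFD : ∀ s ∈ F, s ∈ D := by
    intro s hs
    rw [he] at hs
    obtain ⟨j, rfl⟩ := hs
    exact ⟨{j}, Finset.singleton_nonempty j, by simp⟩
  have hDc : D.Countable := by
    apply Set.Countable.mono _ (Set.countable_range (fun t : Finset ℕ => ⋂ i ∈ t, e i))
    rintro s ⟨t, -, rfl⟩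
    exact mem_range_self t
  have hDpi : IsPiSystem D := by
    rintro s ⟨ts, hts, rfl⟩ s' ⟨ts', hts', rfl⟩ -
    refine ⟨ts ∪ ts', hts.mono Finset.subset_union_left, ?_⟩
    ext x
    simp [Finset.mem_union, or_imp, forall_and]
  have hDmeas : ∀ s ∈ D, MeasurableSet s := by
    rintro s ⟨t, -, rfl⟩
    exact Finset.measurableSet_biInter t fun i _ => ((hFprop _ (heF i)).1).measurableSet
  have hDball : ∀ s ∈ D, ∃ n : ℕ, s ⊆ Metric.ball x₀ n := by
    rintro s ⟨t, ⟨i, hi⟩, rfl⟩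
    obtain ⟨n, hn⟩ := (hFprop _ (heF i)).2
    exact ⟨n, (Set.biInter_subset_of_mem hi).trans hn⟩
  have hball : ∀ n : ℕ, Metric.ball x₀ n ∈ D := by
    intro n
    have h : univ ∩ Metric.ball x₀ n ∈ F := hFmem univ (mem_insert _ _) n
    have h2 := hFD _ h
    rwa [univ_inter] at h2
  refine ⟨D, hDc, hDpi, ?_, hDmeas, hDball, hball⟩
  rw [BorelSpace.measurable_eq (α := X)]
  apply le_antisymm
  · rw [hbasis.borel_eq_generateFrom]
    apply MeasurableSpace.generateFrom_le
    intro u hu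
    have hcup : u = ⋃ n : ℕ, u ∩ Metric.ball x₀ n := by
      ext x
      simp only [mem_iUnion, mem_inter_iff, Metric.mem_ball]
      constructor
      · intro hx
        obtain ⟨n, hn⟩ := exists_nat_gt (dist x x₀)
        exact ⟨n, hx, hn⟩
      · rintro ⟨n, hx, -⟩; exact hx
    rw [hcup]
    apply MeasurableSet.iUnion
    intro n
    exact MeasurableSpace.measurableSet_generateFrom
      (hFD _ (hFmem u (mem_insert_of_mem _ hu) n))
  · apply MeasurableSpace.generateFrom_le
    intro s hs
    rw [← BorelSpace.measurable_eq (α := X)]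
    exact hDmeas s hs


/-- If `T` has property (P), any ergodic `T`-random measure whose realizations
are a.s. absolutely continuous with respect to `μ` is a.s. equal to `α·μ` for some constant
`α ∈ [0,∞]` (no moment hypothesis). -/
theorem stmt8
    {X : Type*} [MeasurableSpace X] [MetricSpace X] [BorelSpace X]
    [TopologicalSpace.SeparableSpace X] [CompleteSpace X]
    {Ω : Type*} [MeasurableSpace Ω]
    (μ : Measure X) (hμbdd : BddFin μ) (hμcont : IsContinuousM μ) (hμinf : μ Set.univ = ⊤)
    (T : X ≃ X) (hTmeas : Measurable ⇑T) (hTmeas' : Measurable ⇑T.symm)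
    (hT : MeasurePreserving ⇑T μ μ)
    (hP : PropertyP μ T)
    (P : Measure Ω) [IsProbabilityMeasure P]
    (S : Ω ≃ Ω) (hS : MeasurePreserving ⇑S P P) (hSerg : Ergodic ⇑S P)
    (N : TRM μ (⇑T) P (⇑S))
    (hac : ∀ᵐ ω ∂P, N.toFun ω ≪ μ) :
    ∃ α : ℝ≥0∞, ∀ᵐ ω ∂P, N.toFun ω = α • μ := by
  classical
  haveI : SecondCountableTopology X := UniformSpace.secondCountable_of_separable X
  have hXne : Nonempty X := by
    by_contra h
    rw [not_nonempty_iff] at h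
    rw [Set.univ_eq_empty_iff.mpr h, measure_empty] at hμinf
    exact (by simp : (0 : ℝ≥0∞) ≠ ⊤) hμinf
  obtain ⟨x₀⟩ := hXne
  have hμball : ∀ n : ℕ, μ (Metric.ball x₀ n) < ⊤ :=
    fun n => hμbdd _ Metric.isBounded_ball
  haveI : SigmaFinite μ := sigmaFinite_of_balls x₀ hμball
  obtain ⟨n₀, hn₀⟩ : ∃ n : ℕ, μ (Metric.ball x₀ n) ≠ 0 := by
    by_contra h
    push_neg at h
    have h0 : μ univ = 0 := by
      rw [← Metric.iUnion_ball_nat x₀]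
      exact measure_iUnion_null fun n => h n
    rw [h0] at hμinf
    exact (by simp : (0 : ℝ≥0∞) ≠ ⊤) hμinf
  set A₀ : Set X := Metric.ball x₀ n₀ with hA₀def
  have hA₀m : MeasurableSet A₀ := Metric.isOpen_ball.measurableSet
  have hA₀pos : μ A₀ ≠ 0 := hn₀
  have hA₀fin : μ A₀ ≠ ⊤ := (hμball n₀).ne
  -- jointly measurable density
  obtain ⟨f, hfm, hf⟩ := exists_jointDensity x₀ μ hμball N.toFun N.measurable'
  have hGood : ∀ᵐ ω ∂P, N.toFun ω = μ.withDensity (f ω) := by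
    filter_upwards [N.bddFin', hac] with ω h1 h2
    exact hf ω (fun n => h1 _ Metric.isBounded_ball) h2
  have hGoodS : ∀ᵐ ω ∂P, N.toFun (S ω) = μ.withDensity (f (S ω)) :=
    hS.quasiMeasurePreserving.ae hGood
  have hfS : ∀ᵐ ω ∂P, (f (S ω)) =ᵐ[μ] fun x => f ω (T.symm x) := by
    filter_upwards [N.equivariant', hGood, hGoodS] with ω h1 h2 h3
    have h4 : μ.withDensity (f (S ω)) = μ.withDensity (fun x => f ω (T.symm x)) := by
      rw [← h3, h1, h2, map_withDensity_equiv T hTmeas hTmeas' hT (hfm.of_uncurry_left)]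
    exact wd_inj (hfm.of_uncurry_left) ((hfm.of_uncurry_left).comp hTmeas') h4
  -- the countable generating π-system
  obtain ⟨Dc, hDc, hDpi, hgen, hDmeas, hDball, hball⟩ := exists_pi_system (X := X) x₀
  have hDfin : ∀ s ∈ Dc, μ s ≠ ⊤ := by
    intro s hs
    obtain ⟨n, hn⟩ := hDball s hs
    exact ((measure_mono hn).trans_lt (hμball n)).ne
  -- Main step: for every truncation level, the truncated density is a.e. constant
  have keym : ∀ m : ℕ, ∃ αm : ℝ≥0∞,
      ∀ᵐ ω ∂P, (fun x => min (f ω x) (m : ℝ≥0∞)) =ᵐ[μ] fun _ => αm := by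
    intro m
    set c : ℝ≥0∞ := (m : ℝ≥0∞) with hcdef
    have hc : c ≠ ⊤ := by simp [hcdef]
    set g : Ω → X → ℝ≥0∞ := fun ω x => min (f ω x) c with hgdef
    have hgm : Measurable (Function.uncurry g) := by
      have : Function.uncurry g = fun p => min (Function.uncurry f p) c := rfl
      rw [this]
      exact hfm.min measurable_const
    have hgle : ∀ ω x, g ω x ≤ c := fun ω x => min_le_right _ _
    have hgsec : ∀ ω, Measurable (g ω) := fun ω => hgm.of_uncurry_left
    have hgS : ∀ᵐ ω ∂P, (g (S ω)) =ᵐ[μ] fun x => g ω (T.symm x) := by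
      filter_upwards [hfS] with ω h
      filter_upwards [h] with x hx
      simp only [hgdef, hx]
    -- the second moment measure σ₂ on X²
    set μ2 : Measure (Fin 2 → X) := Measure.pi (fun _ : Fin 2 => μ) with hμ2
    set H : (Fin 2 → X) → ℝ≥0∞ := fun x => ∫⁻ ω, g ω (x 0) * g ω (x 1) ∂P with hH
    have hFm : Measurable fun p : (Fin 2 → X) × Ω => g p.2 (p.1 0) * g p.2 (p.1 1) := by
      apply Measurable.mul
      · exact hgm.comp (measurable_snd.prodMk ((measurable_pi_apply 0).comp measurable_fst))
      · exact hgm.comp (measurable_snd.prodMk ((measurable_pi_apply 1).comp measurable_fst))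
    have hHm : Measurable H := hFm.lintegral_prod_right'
    have hHle : ∀ x, H x ≤ c * c := by
      intro x
      calc H x ≤ ∫⁻ _, c * c ∂P := lintegral_mono fun ω => mul_le_mul' (hgle ω _) (hgle ω _)
        _ = c * c := by simp [measure_univ]
    set σ2 : Measure (Fin 2 → X) := μ2.withDensity H with hσ2
    -- boundedly finite
    have hσbdd : ∀ Bs : Set (Fin 2 → X), IsBounded Bs → σ2 Bs < ⊤ := by
      intro Bs hBs
      obtain ⟨r, hr⟩ := hBs.subset_closedBall (fun _ : Fin 2 => x₀)
      have hr0 : (0 : ℝ) ≤ max r 0 := le_max_right _ _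
      have hr' : Bs ⊆ Metric.closedBall (fun _ : Fin 2 => x₀) (max r 0) :=
        hr.trans (Metric.closedBall_subset_closedBall (le_max_left _ _))
      have hcb : Metric.closedBall (fun _ : Fin 2 => x₀) (max r 0)
          = Set.pi univ fun _ : Fin 2 => Metric.closedBall x₀ (max r 0) :=
        closedBall_pi _ hr0
      have hcbm : MeasurableSet (Set.pi univ fun _ : Fin 2 => Metric.closedBall x₀ (max r 0)) :=
        MeasurableSet.univ_pi fun _ => Metric.isClosed_closedBall.measurableSet
      calc σ2 Bs ≤ σ2 (Set.pi univ fun _ : Fin 2 => Metric.closedBall x₀ (max r 0)) :=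
            measure_mono (hr'.trans_eq hcb)
        _ = ∫⁻ x in Set.pi univ fun _ : Fin 2 => Metric.closedBall x₀ (max r 0), H x ∂μ2 :=
            withDensity_apply _ hcbm
        _ ≤ ∫⁻ _ in Set.pi univ fun _ : Fin 2 => Metric.closedBall x₀ (max r 0), c * c ∂μ2 :=
            lintegral_mono fun x => hHle x
        _ = c * c * μ2 (Set.pi univ fun _ : Fin 2 => Metric.closedBall x₀ (max r 0)) :=
            setLIntegral_const _ _
        _ < ⊤ := by
            rw [hμ2, Measure.pi_pi]
            refine ENNReal.mul_lt_top (ENNReal.mul_lt_top hc.lt_top hc.lt_top) ?_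
            refine ENNReal.prod_lt_top fun i _ => ?_
            exact (hμbdd _ Metric.isBounded_closedBall)
    -- marginals are absolutely continuous
    have hσmarg : ∀ i : Fin 2, Measure.map (fun x : Fin 2 → X => x i) σ2 ≪ μ := by
      intro i
      refine Measure.AbsolutelyContinuous.mk fun s hs hs0 => ?_
      rw [Measure.map_apply (measurable_pi_apply i) hs, hσ2,
        withDensity_apply _ ((measurable_pi_apply i) hs)]
      have hnull : μ2 ((fun x : Fin 2 → X => x i) ⁻¹' s) = 0 :=
        Measure.pi_eval_preimage_null _ hs0
      rw [Measure.restrict_eq_zero.mpr hnull, lintegral_zero_measure]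
    -- invariance of σ₂
    have hmpT2 : MeasurePreserving (piMap (⇑T) 2) μ2 μ2 :=
      measurePreserving_pi (fun _ : Fin 2 => μ) (fun _ : Fin 2 => μ) (fun _ => hT)
    have hswap : ∀ (E : Set (Fin 2 → X)), MeasurableSet E →
        σ2 E = ∫⁻ ω, ∫⁻ x in E, g ω (x 0) * g ω (x 1) ∂μ2 ∂P := by
      intro E hE
      rw [hσ2, withDensity_apply _ hE]
      exact lintegral_lintegral_swap (hFm.aemeasurable)
    have hmpσ : MeasurePreserving (piMap (⇑T) 2) σ2 σ2 := by
      refine ⟨hmpT2.measurable, ?_⟩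
      ext s hs
      rw [Measure.map_apply hmpT2.measurable hs]
      have hchg : ∀ ω, ∫⁻ x in (piMap (⇑T) 2) ⁻¹' s, g ω (x 0) * g ω (x 1) ∂μ2
          = ∫⁻ y in s, g ω (T.symm (y 0)) * g ω (T.symm (y 1)) ∂μ2 := by
        intro ω
        have hmeas : Measurable fun y : Fin 2 → X =>
            g ω (T.symm (y 0)) * g ω (T.symm (y 1)) :=
          (((hgsec ω).comp hTmeas').comp (measurable_pi_apply 0)).mul
            (((hgsec ω).comp hTmeas').comp (measurable_pi_apply 1))
        have h := hmpT2.setLIntegral_comp_preimage hs hmeas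
        rw [← h]
        apply lintegral_congr
        intro x
        simp [piMap]
      have hae : ∀ᵐ ω ∂P, ∫⁻ y in s, g ω (T.symm (y 0)) * g ω (T.symm (y 1)) ∂μ2
          = ∫⁻ y in s, g (S ω) (y 0) * g (S ω) (y 1) ∂μ2 := by
        filter_upwards [hgS] with ω h
        apply lintegral_congr_ae
        apply ae_restrict_of_ae
        have hco : ∀ i : Fin 2, ∀ᵐ y ∂μ2, g ω (T.symm (y i)) = g (S ω) (y i) := by
          intro i
          have hb : μ {x | ¬ g (S ω) x = g ω (T.symm x)} = 0 := h
          have hnull : μ2 ((fun y : Fin 2 → X => y i) ⁻¹'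
              {x | ¬ g (S ω) x = g ω (T.symm x)}) = 0 :=
            Measure.pi_eval_preimage_null _ hb
          rw [ae_iff]
          refine measure_mono_null ?_ hnull
          intro y hy
          simp only [Set.mem_setOf_eq, Set.mem_preimage] at hy ⊢
          exact fun hc' => hy hc'.symm
        filter_upwards [hco 0, hco 1] with y h0 h1
        rw [h0, h1]
      set J : Ω → ℝ≥0∞ := fun ω => ∫⁻ y in s, g ω (y 0) * g ω (y 1) ∂μ2 with hJ
      have hJm : Measurable J := by
        have hFm' : Measurable fun p : Ω × (Fin 2 → X) => g p.1 (p.2 0) * g p.1 (p.2 1) := by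
          apply Measurable.mul
          · exact hgm.comp (measurable_fst.prodMk ((measurable_pi_apply 0).comp measurable_snd))
          · exact hgm.comp (measurable_fst.prodMk ((measurable_pi_apply 1).comp measurable_snd))
        exact hFm'.lintegral_prod_right'
      calc σ2 ((piMap (⇑T) 2) ⁻¹' s)
          = ∫⁻ ω, ∫⁻ x in (piMap (⇑T) 2) ⁻¹' s, g ω (x 0) * g ω (x 1) ∂μ2 ∂P :=
            hswap _ (hmpT2.measurable hs)
        _ = ∫⁻ ω, ∫⁻ y in s, g ω (T.symm (y 0)) * g ω (T.symm (y 1)) ∂μ2 ∂P :=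
            lintegral_congr fun ω => hchg ω
        _ = ∫⁻ ω, J (S ω) ∂P := lintegral_congr_ae hae
        _ = ∫⁻ ω, J ω ∂P := hS.lintegral_comp hJm
        _ = σ2 s := (hswap s hs).symm
    -- apply property (P)
    obtain ⟨-, cj, πs, ks, -, hsum⟩ := hP 2 one_le_two σ2 hσbdd hσmarg hmpσ
    have hzmp : ∀ j : ℤ, MeasurePreserving ⇑((T : Equiv.Perm X) ^ j) μ μ :=
      zpow_mp T hTmeas hTmeas' hT
    have hterm : ∀ j : ℕ, ∃ d : ℝ≥0∞,
        cj j • Measure.map (zpowPiMap T (ks j)) (mPartMeasure μ (πs j)) = d • μ2 := by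
      intro j
      rcases finpartition_fin_two (πs j) with hdiag | hprodp
      · refine ⟨0, ?_⟩
        have hDj := mPartMeasure_diag_map_top (μ := μ) hμinf T hTmeas hTmeas' (πs j)
          hdiag (ks j)
        set Dset := {x : Fin 2 → X |
          x 1 = ((T : Equiv.Perm X) ^ (ks j 1 - ks j 0)) (x 0)} with hDset
        have hDm : MeasurableSet Dset :=
          StronglyMeasurable.measurableSet_eq_fun
            (measurable_pi_apply 1).stronglyMeasurable
            (show Measurable fun x : Fin 2 → X =>
                ((T : Equiv.Perm X) ^ (ks j 1 - ks j 0)) (x 0) from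
              (hzmp _).measurable.comp (measurable_pi_apply 0)).stronglyMeasurable
        have hσD : σ2 Dset = 0 := by
          rw [hσ2, withDensity_apply _ hDm]
          have hnull : μ2 Dset = 0 :=
            pi_two_graph_null (fun x => hμcont x) (hzmp (ks j 1 - ks j 0)).measurable
          rw [Measure.restrict_eq_zero.mpr hnull, lintegral_zero_measure]
        have hsumD := congrArg (fun m : Measure (Fin 2 → X) => m Dset) hsum
        rw [hσD, Measure.sum_apply _ hDm] at hsumD
        have hj0 := ENNReal.tsum_eq_zero.mp hsumD.symm j
        rw [Measure.smul_apply, smul_eq_mul, hDj] at hj0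
        have hcj0 : cj j = 0 := by
          by_contra hne
          rw [ENNReal.mul_top hne] at hj0
          exact top_ne_zero hj0
        rw [hcj0]
        simp
      · refine ⟨cj j, ?_⟩
        have h1 : mPartMeasure μ (πs j) = μ2 := mPartMeasure_product (πs j) hprodp
        have h2 : MeasurePreserving (zpowPiMap T (ks j)) μ2 μ2 :=
          measurePreserving_pi (fun _ : Fin 2 => μ) (fun _ : Fin 2 => μ)
            (fun i => hzmp (ks j i))
        rw [h1, h2.map_eq]
    choose d hd using hterm
    set β : ℝ≥0∞ := ∑' j, d j with hβ
    have hσβ : σ2 = β • μ2 := by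
      rw [hsum]
      ext s hs
      rw [Measure.sum_apply _ hs, Measure.smul_apply, smul_eq_mul]
      calc ∑' j, (cj j • Measure.map (zpowPiMap T (ks j)) (mPartMeasure μ (πs j))) s
          = ∑' j, (d j • μ2) s := by
            apply tsum_congr
            intro j
            rw [hd j]
        _ = ∑' j, d j * μ2 s := by
            apply tsum_congr
            intro j
            rw [Measure.smul_apply, smul_eq_mul]
        _ = β * μ2 s := by rw [hβ]; exact ENNReal.tsum_mul_right
    have hHβ : H =ᵐ[μ2] fun _ => β := by
      apply wd_inj hHm measurable_const
      rw [withDensity_const, ← hσ2, hσβ]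
    have hμ2ne : μ2 ≠ 0 := by
      intro h0
      have := congrArg (fun m : Measure (Fin 2 → X) => m univ) h0
      simp only [Measure.coe_zero, Pi.zero_apply] at this
      rw [hμ2, Measure.pi_univ] at this
      simp [hμinf] at this
    haveI : (MeasureTheory.ae μ2).NeBot := ae_neBot.mpr hμ2ne
    obtain ⟨xw, hxw⟩ := hHβ.exists
    have hxw' : H xw = β := hxw
    have hβfin : β ≠ ⊤ := by
      rw [← hxw']
      exact ((hHle xw).trans_lt (ENNReal.mul_lt_top hc.lt_top hc.lt_top)).ne
    -- transfer to the product space X × X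
    set H2 : X × X → ℝ≥0∞ := fun p => ∫⁻ ω, g ω p.1 * g ω p.2 ∂P with hH2
    have hH2m : Measurable H2 := by
      have hFm2 : Measurable fun p : (X × X) × Ω => g p.2 p.1.1 * g p.2 p.1.2 := by
        apply Measurable.mul
        · exact hgm.comp (measurable_snd.prodMk (measurable_fst.fst))
        · exact hgm.comp (measurable_snd.prodMk (measurable_fst.snd))
      exact hFm2.lintegral_prod_right'
    have hfta := measurePreserving_finTwoArrow (α := X) μ
    have hH2β : H2 =ᵐ[μ.prod μ] fun _ => β := by
      have hmap : μ.prod μ = Measure.map (⇑MeasurableEquiv.finTwoArrow) μ2 := by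
        rw [hμ2, hfta.map_eq]
      have hpre : ∀ᵐ x ∂μ2, H2 (MeasurableEquiv.finTwoArrow x) = β := by
        filter_upwards [hHβ] with x hx
        have h7 : H2 (MeasurableEquiv.finTwoArrow x) = H x := by
          rw [hH2, hH]
          simp [MeasurableEquiv.finTwoArrow]
        rw [h7]
        exact hx
      have hmapped : ∀ᵐ y ∂(Measure.map (⇑MeasurableEquiv.finTwoArrow) μ2), H2 y = β :=
        (ae_map_iff (MeasurableEquiv.measurable _).aemeasurable
          (show MeasurableSet {p : X × X | H2 p = β} from
            hH2m (measurableSet_singleton β))).2 hpre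
      rw [hmap]
      filter_upwards [hmapped] with y hy using hy
    -- second moments of the set integrals
    set Z : Set X → Ω → ℝ≥0∞ := fun A ω => ∫⁻ x in A, g ω x ∂μ with hZ
    have hZm : ∀ A : Set X, Measurable (Z A) := by
      intro A
      exact (show Measurable fun p : Ω × X => g p.1 p.2 from hgm).lintegral_prod_right'
    have hZle : ∀ (A : Set X) ω, Z A ω ≤ c * μ A := by
      intro A ω
      calc Z A ω ≤ ∫⁻ _ in A, c ∂μ := lintegral_mono fun x => hgle ω x
        _ = c * μ A := setLIntegral_const A c
    have hZZ : ∀ {A A' : Set X}, MeasurableSet A → MeasurableSet A' →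
        ∫⁻ ω, Z A ω * Z A' ω ∂P = β * (μ A * μ A') := by
      intro A A' hA hA'
      have hper : ∀ ω, Z A ω * Z A' ω
          = ∫⁻ p in A ×ˢ A', g ω p.1 * g ω p.2 ∂(μ.prod μ) := by
        intro ω
        rw [hZ]
        rw [← lintegral_prod_mul ((hgsec ω).aemeasurable) ((hgsec ω).aemeasurable)]
        rw [Measure.prod_restrict]
      simp only [hper]
      have hunc : Measurable fun p : Ω × (X × X) => g p.1 p.2.1 * g p.1 p.2.2 := by
        apply Measurable.mul
        · exact hgm.comp (measurable_fst.prodMk measurable_snd.fst)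
        · exact hgm.comp (measurable_fst.prodMk measurable_snd.snd)
      rw [lintegral_lintegral_swap hunc.aemeasurable]
      calc ∫⁻ p in A ×ˢ A', (∫⁻ ω, g ω p.1 * g ω p.2 ∂P) ∂(μ.prod μ)
          = ∫⁻ p in A ×ˢ A', β ∂(μ.prod μ) :=
            lintegral_congr_ae (ae_restrict_of_ae hH2β)
        _ = β * ((μ.prod μ) (A ×ˢ A')) := setLIntegral_const _ _
        _ = β * (μ A * μ A') := by rw [Measure.prod_prod]
    -- the key identity between set integrals
    have hZeq : ∀ {A : Set X}, MeasurableSet A → μ A ≠ ⊤ →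
        ∀ᵐ ω ∂P, Z A ω * μ A₀ = Z A₀ ω * μ A := by
      intro A hA hAfin
      have haM : ∀ ω, Z A ω * μ A₀ ≤ c * μ A * μ A₀ := fun ω =>
        mul_le_mul_left (hZle A ω) _
      have hbM : ∀ ω, Z A₀ ω * μ A ≤ c * μ A * μ A₀ := by
        intro ω
        calc Z A₀ ω * μ A ≤ (c * μ A₀) * μ A := mul_le_mul_left (hZle A₀ ω) _
          _ = c * μ A * μ A₀ := by ring
      have hMfin : c * μ A * μ A₀ ≠ ⊤ :=
        ENNReal.mul_ne_top (ENNReal.mul_ne_top hc hAfin) hA₀fin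
      have haa : ∫⁻ ω, (Z A ω * μ A₀) * (Z A ω * μ A₀) ∂P
          = β * (μ A * μ A) * (μ A₀ * μ A₀) := by
        have h : ∀ ω, (Z A ω * μ A₀) * (Z A ω * μ A₀)
            = (Z A ω * Z A ω) * (μ A₀ * μ A₀) := fun ω => by ring
        simp only [h]
        rw [lintegral_mul_const _ (f := fun ω => Z A ω * Z A ω) ((hZm A).mul (hZm A)), hZZ hA hA]
      have hbb : ∫⁻ ω, (Z A₀ ω * μ A) * (Z A₀ ω * μ A) ∂P
          = β * (μ A * μ A) * (μ A₀ * μ A₀) := by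
        have h : ∀ ω, (Z A₀ ω * μ A) * (Z A₀ ω * μ A)
            = (Z A₀ ω * Z A₀ ω) * (μ A * μ A) := fun ω => by ring
        simp only [h]
        rw [lintegral_mul_const _ (f := fun ω => Z A₀ ω * Z A₀ ω) ((hZm A₀).mul (hZm A₀)), hZZ hA₀m hA₀m]
        ring
      have hab : ∫⁻ ω, (Z A ω * μ A₀) * (Z A₀ ω * μ A) ∂P
          = β * (μ A * μ A) * (μ A₀ * μ A₀) := by
        have h : ∀ ω, (Z A ω * μ A₀) * (Z A₀ ω * μ A)
            = (Z A ω * Z A₀ ω) * (μ A₀ * μ A) := fun ω => by ring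
        simp only [h]
        rw [lintegral_mul_const _ (f := fun ω => Z A ω * Z A₀ ω) ((hZm A).mul (hZm A₀)), hZZ hA hA₀m]
        ring
      exact ae_eq_of_second_moments ((hZm A).mul_const _) ((hZm A₀).mul_const _)
        hMfin haM hbM haa hbb hab
    -- invariance of Z A₀ under S, hence a.e. constancy by ergodicity
    have hVS : ∀ᵐ ω ∂P, Z A₀ (S ω) = Z (⇑T ⁻¹' A₀) ω := by
      filter_upwards [hgS] with ω h
      have h1 : Z A₀ (S ω) = ∫⁻ x in A₀, g (S ω) x ∂μ := rfl
      have h2 : ∫⁻ x in A₀, g (S ω) x ∂μ = ∫⁻ x in A₀, g ω (T.symm x) ∂μ :=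
        lintegral_congr_ae (ae_restrict_of_ae h)
      have h3 := hT.setLIntegral_comp_preimage hA₀m
        (f := fun x => g ω (T.symm x)) ((hgsec ω).comp hTmeas')
      rw [h1, h2, ← h3]
      apply lintegral_congr
      intro a
      simp
    have hTA₀m : MeasurableSet (⇑T ⁻¹' A₀) := hTmeas hA₀m
    have hTA₀μ : μ (⇑T ⁻¹' A₀) = μ A₀ := hT.measure_preimage hA₀m.nullMeasurableSet
    have hVinv : (Z A₀) ∘ ⇑S =ᵐ[P] Z A₀ := by
      filter_upwards [hVS, hZeq hTA₀m (by rw [hTA₀μ]; exact hA₀fin)] with ω h1 h2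
      have h4 : (Z A₀ ∘ ⇑S) ω = Z (⇑T ⁻¹' A₀) ω := h1
      rw [h4]
      rw [hTA₀μ] at h2
      exact ennreal_mul_cancel hA₀pos hA₀fin h2
    obtain ⟨v₀, hv₀⟩ := hSerg.ae_eq_const_of_ae_eq_comp₀
      ((hZm A₀).nullMeasurable) hVinv
    set αm : ℝ≥0∞ := v₀ * (μ A₀)⁻¹ with hαm
    have hZconst : ∀ A ∈ Dc, ∀ᵐ ω ∂P, Z A ω = αm * μ A := by
      intro A hA
      filter_upwards [hZeq (hDmeas A hA) (hDfin A hA), hv₀] with ω h1 h2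
      have h2' : Z A₀ ω = v₀ := h2
      have h3 : Z A ω * μ A₀ = (αm * μ A) * μ A₀ := by
        rw [h1, h2', hαm]
        calc v₀ * μ A = v₀ * μ A * 1 := by ring
          _ = v₀ * μ A * ((μ A₀)⁻¹ * μ A₀) := by
            rw [ENNReal.inv_mul_cancel hA₀pos hA₀fin]
          _ = v₀ * (μ A₀)⁻¹ * μ A * μ A₀ := by ring
      exact ennreal_mul_cancel hA₀pos hA₀fin h3
    have hmeaseq : ∀ᵐ ω ∂P, μ.withDensity (g ω) = αm • μ := by
      have hallD : ∀ᵐ ω ∂P, ∀ A ∈ Dc, Z A ω = αm * μ A := (ae_ball_iff hDc).2 hZconst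
      filter_upwards [hallD] with ω hω
      refine Measure.ext_of_generateFrom_of_cover_subset hgen hDpi
        (T := Set.range fun n : ℕ => Metric.ball x₀ n) ?_ (countable_range _) ?_ ?_ ?_
      · rintro _ ⟨n, rfl⟩
        exact hball n
      · rw [Set.sUnion_range]
        exact Metric.iUnion_ball_nat x₀
      · rintro _ ⟨n, rfl⟩
        rw [withDensity_apply _ (hDmeas _ (hball n))]
        exact ((hZle _ ω).trans_lt (ENNReal.mul_lt_top hc.lt_top (hμball n))).ne
      · intro s hsD
        rw [withDensity_apply _ (hDmeas s hsD), Measure.smul_apply, smul_eq_mul]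
        exact hω s hsD
    refine ⟨αm, ?_⟩
    filter_upwards [hmeaseq] with ω h
    have h2 : μ.withDensity (g ω) = μ.withDensity (fun _ => αm) := by
      rw [withDensity_const]
      exact h
    exact wd_inj (hgsec ω) measurable_const h2
  -- conclusion: let m → ∞
  choose αs hαs using keym
  refine ⟨⨆ m : ℕ, αs m, ?_⟩
  have hall : ∀ᵐ ω ∂P, ∀ m : ℕ, (fun x => min (f ω x) (m : ℝ≥0∞)) =ᵐ[μ] fun _ => αs m :=
    (ae_all_iff).2 hαs
  filter_upwards [hGood, hall] with ω h1 h2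
  rw [h1]
  have h3 : f ω =ᵐ[μ] fun _ => ⨆ m : ℕ, αs m := by
    have h4 : ∀ᵐ x ∂μ, ∀ m : ℕ, min (f ω x) (m : ℝ≥0∞) = αs m :=
      (ae_all_iff).2 fun m => h2 m
    filter_upwards [h4] with x hx
    have h5 : f ω x = ⨆ m : ℕ, min (f ω x) (m : ℝ≥0∞) := by
      refine le_antisymm ?_ (iSup_le fun m => min_le_left _ _)
      rcases eq_or_ne (f ω x) ⊤ with htop | hne
      · rw [htop]
        have h6 : ∀ m : ℕ, min (⊤ : ℝ≥0∞) (m : ℝ≥0∞) = (m : ℝ≥0∞) := fun m =>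
          min_eq_right le_top
        calc (⊤ : ℝ≥0∞) = ⨆ m : ℕ, (m : ℝ≥0∞) := ENNReal.iSup_natCast.symm
          _ ≤ ⨆ m : ℕ, min (⊤ : ℝ≥0∞) (m : ℝ≥0∞) := by
              apply iSup_mono
              intro m
              rw [h6 m]
      · obtain ⟨k, hk⟩ := ENNReal.exists_nat_gt hne
        calc f ω x = min (f ω x) (k : ℝ≥0∞) := (min_eq_left hk.le).symm
          _ ≤ ⨆ m : ℕ, min (f ω x) (m : ℝ≥0∞) :=
            le_iSup (fun m : ℕ => min (f ω x) (m : ℝ≥0∞)) k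
    rw [h5]
    exact iSup_congr hx
  rw [withDensity_congr_ae h3, withDensity_const]


end PPP
end
end

section
/- If the infinite measure preserving system (X,𝒜,μ,T) has the (P) property, then T has infinite ergodic index: for every n ≥ 1, the Cartesian power T^{×n} is ergodic on (X^n, μ^{⊗n}). -/
open MeasureTheory ENNReal NNReal Set Bornology

noncomputable section

namespace PPP

variable {X Y Ω : Type*} [MeasurableSpace X] [MeasurableSpace Y] [MeasurableSpace Ω]

section AuxStmt16

lemma zpow_measurable {X : Type*} [MeasurableSpace X] (T : X ≃ X)
    (hT : Measurable ⇑T) (hT' : Measurable ⇑T.symm) (m : ℤ) :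
    Measurable ⇑((T : Equiv.Perm X) ^ m) := by
  cases m with
  | ofNat l =>
      rw [Int.ofNat_eq_coe, zpow_natCast, Equiv.Perm.coe_pow]
      exact hT.iterate l
  | negSucc l =>
      rw [zpow_negSucc, ← inv_pow, Equiv.Perm.coe_pow]
      exact hT'.iterate (l + 1)

lemma equiv_symm_measurePreserving {X : Type*} [MeasurableSpace X] {μ : Measure X} (T : X ≃ X)
    (hT' : Measurable ⇑T.symm) (h : MeasurePreserving ⇑T μ μ) :
    MeasurePreserving ⇑T.symm μ μ := by
  refine ⟨hT', ?_⟩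
  ext s hs
  rw [Measure.map_apply hT' hs, ← Equiv.image_eq_preimage_symm]
  have himg : MeasurableSet (⇑T '' s) := by
    rw [Equiv.image_eq_preimage_symm]; exact hT' hs
  have h2 := h.measure_preimage himg.nullMeasurableSet
  rw [Equiv.preimage_image] at h2
  exact h2.symm

lemma zpow_measurePreserving {X : Type*} [MeasurableSpace X] {μ : Measure X} (T : X ≃ X)
    (hT' : Measurable ⇑T.symm) (h : MeasurePreserving ⇑T μ μ) (m : ℤ) :
    MeasurePreserving ⇑((T : Equiv.Perm X) ^ m) μ μ := by
  cases m with
  | ofNat l =>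
      rw [Int.ofNat_eq_coe, zpow_natCast, Equiv.Perm.coe_pow]
      exact h.iterate l
  | negSucc l =>
      rw [zpow_negSucc, ← inv_pow, Equiv.Perm.coe_pow]
      exact (equiv_symm_measurePreserving T hT' h).iterate (l + 1)

lemma sigmaFinite_of_bddFin' {X : Type*} [MeasurableSpace X] [MetricSpace X]
    (μ : Measure X) (hμbdd : BddFin μ) (hne : Nonempty X) : SigmaFinite μ := by
  obtain ⟨x₀⟩ := hne
  exact ⟨⟨⟨fun m => Metric.closedBall x₀ m, fun _ => trivial,
    fun m => hμbdd _ Metric.isBounded_closedBall,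
    Metric.iUnion_closedBall_nat x₀⟩⟩⟩

lemma mPartMeasure_discrete {X : Type*} [MeasurableSpace X] (μ : Measure X) [SigmaFinite μ]
    {n : ℕ} (π : Finpartition (Finset.univ : Finset (Fin n)))
    (hdisc : ∀ i i' : Fin n, i' ∈ π.part i → i' = i) :
    mPartMeasure μ π = Measure.pi fun _ : Fin n => μ := by
  classical
  set F : ({Q // Q ∈ π.parts} → X) → (Fin n → X) := fun y =>
    fun i => y ⟨π.part i, π.part_mem.2 (Finset.mem_univ i)⟩ with hF
  have hFmeas : Measurable F := measurable_pi_iff.mpr fun i => measurable_pi_apply _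
  have hinj : Function.Injective
      (fun i : Fin n => (⟨π.part i, π.part_mem.2 (Finset.mem_univ i)⟩ : {Q // Q ∈ π.parts})) := by
    intro a b hab
    have hab' : π.part a = π.part b := congrArg Subtype.val hab
    have : a ∈ π.part b := hab' ▸ π.mem_part (Finset.mem_univ a)
    exact hdisc b a this
  have hsurj : Function.Surjective
      (fun i : Fin n => (⟨π.part i, π.part_mem.2 (Finset.mem_univ i)⟩ : {Q // Q ∈ π.parts})) := by
    rintro ⟨Q, hQ⟩
    obtain ⟨x, hx⟩ := π.nonempty_of_mem_parts hQ
    exact ⟨x, Subtype.ext (π.part_eq_of_mem hQ hx)⟩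
  set e : Fin n ≃ {Q // Q ∈ π.parts} := Equiv.ofBijective _ ⟨hinj, hsurj⟩ with he
  refine (Measure.pi_eq fun s hs => ?_).symm
  rw [mPartMeasure, Measure.map_apply hFmeas (MeasurableSet.univ_pi hs)]
  have hpre : (fun y : {Q // Q ∈ π.parts} → X =>
        fun i => y ⟨π.part i, π.part_mem.2 (Finset.mem_univ i)⟩) ⁻¹' (univ.pi s)
      = univ.pi fun Q => s (e.symm Q) := by
    ext y
    simp only [mem_preimage, mem_pi, mem_univ, true_implies]
    constructor
    · intro h Q
      have h2 := h (e.symm Q)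
      have h3 : e (e.symm Q) = Q := e.apply_symm_apply Q
      rw [show (⟨π.part (e.symm Q), π.part_mem.2 (Finset.mem_univ _)⟩ : {Q // Q ∈ π.parts})
          = Q from h3] at h2
      exact h2
    · intro h i
      have h2 := h (e i)
      have h3 : e.symm (e i) = i := e.symm_apply_apply i
      rw [h3] at h2
      exact h2
  rw [hpre, Measure.pi_pi]
  exact Equiv.prod_comp e.symm fun i => μ (s i)

lemma msEqFun {A X : Type*} [MeasurableSpace A] [MeasurableSpace X] [MetricSpace X]
    [BorelSpace X] [TopologicalSpace.SeparableSpace X] {f g : A → X}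
    (hf : Measurable f) (hg : Measurable g) : MeasurableSet {a | f a = g a} := by
  haveI : SecondCountableTopology X := UniformSpace.secondCountable_of_separable X
  exact hf.stronglyMeasurable.measurableSet_eq_fun hg.stronglyMeasurable

lemma pi_graph_null {X : Type*} [MeasurableSpace X] [MetricSpace X] [BorelSpace X]
    [TopologicalSpace.SeparableSpace X]
    (μ : Measure X) [SigmaFinite μ] (hμcont : IsContinuousM μ)
    {n : ℕ} {i i' : Fin n} (hne : i' ≠ i) {h : X → X} (hh : Measurable h) :
    (Measure.pi fun _ : Fin n => μ) {x : Fin n → X | x i = h (x i')} = 0 := by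
  classical
  set p : Fin n → Prop := fun l => l ≠ i with hp
  have MP := measurePreserving_piEquivPiSubtypeProd (fun _ : Fin n => μ) p
  have hii : ¬ p i := fun hcon => hcon rfl
  set E : Set ((∀ _l : Subtype p, X) × (∀ _l : {l // ¬ p l}, X)) :=
    {q | q.2 ⟨i, hii⟩ = h (q.1 ⟨i', hne⟩)} with hE'
  have hE : MeasurableSet E :=
    msEqFun measurable_snd.eval (hh.comp measurable_fst.eval)
  have hpre : (MeasurableEquiv.piEquivPiSubtypeProd (fun _ : Fin n => X) p) ⁻¹' E
      = {x : Fin n → X | x i = h (x i')} := rfl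
  rw [← hpre, MP.measure_preimage hE.nullMeasurableSet]
  rw [Measure.measure_prod_null hE]
  refine Filter.Eventually.of_forall fun a => ?_
  have hsec : (Prod.mk a ⁻¹' E) = univ.pi fun _ : {l // ¬ p l} => {h (a ⟨i', hne⟩)} := by
    ext b
    simp only [mem_preimage, mem_pi, mem_univ, true_implies, mem_singleton_iff, hE',
      mem_setOf_eq]
    constructor
    · intro hb l
      have : l = ⟨i, hii⟩ := Subtype.ext (not_not.mp l.2)
      rw [this]
      exact hb
    · intro hb
      exact hb ⟨i, hii⟩
  show (Measure.pi fun _ : {l // ¬ p l} => μ) (Prod.mk a ⁻¹' E) = 0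
  rw [hsec, Measure.pi_pi]
  exact Finset.prod_eq_zero (Finset.mem_univ ⟨i, hii⟩) (hμcont _)

end AuxStmt16

/-- Property (P) implies infinite ergodic index. -/
theorem stmt16
    {X : Type*} [MeasurableSpace X] [MetricSpace X] [BorelSpace X]
    [TopologicalSpace.SeparableSpace X] [CompleteSpace X]
    (μ : Measure X) (hμbdd : BddFin μ) (hμcont : IsContinuousM μ) (hμinf : μ Set.univ = ⊤)
    (T : X ≃ X) (hTmeas : Measurable ⇑T) (hTmeas' : Measurable ⇑T.symm)
    (hT : MeasurePreserving ⇑T μ μ)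
    (hP : PropertyP μ T) :
    InfErgIndex μ ⇑T := by
  classical
  have hXne : Nonempty X := by
    by_contra h
    rw [not_nonempty_iff] at h
    rw [Set.univ_eq_empty_iff.mpr h, measure_empty] at hμinf
    exact (by simp : (0 : ℝ≥0∞) ≠ ⊤) hμinf
  haveI : SigmaFinite μ := sigmaFinite_of_bddFin' μ hμbdd hXne
  obtain ⟨x₀⟩ := hXne
  intro n hn
  set σ : Measure (Fin n → X) := Measure.pi fun _ : Fin n => μ with hσdef
  have hTzm : ∀ m : ℤ, Measurable ⇑((T : Equiv.Perm X) ^ m) :=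
    zpow_measurable T hTmeas hTmeas'
  have hTzp : ∀ m : ℤ, MeasurePreserving ⇑((T : Equiv.Perm X) ^ m) μ μ :=
    zpow_measurePreserving T hTmeas' hT
  have hbdd : ∀ B : Set (Fin n → X), IsBounded B → σ B < ⊤ := by
    intro B hB
    obtain ⟨r, hr⟩ := hB.subset_closedBall (fun _ => x₀)
    have hsub : B ⊆ univ.pi fun _ : Fin n => Metric.closedBall x₀ (max r 0) := by
      refine hr.trans ?_
      rw [← closedBall_pi _ (le_max_right r 0)]
      exact Metric.closedBall_subset_closedBall (le_max_left r 0)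
    calc σ B ≤ σ (univ.pi fun _ => Metric.closedBall x₀ (max r 0)) := measure_mono hsub
    _ = ∏ _i : Fin n, μ (Metric.closedBall x₀ (max r 0)) := Measure.pi_pi _ _
    _ < ⊤ := ENNReal.prod_lt_top fun _ _ => hμbdd _ Metric.isBounded_closedBall
  have hmarg : ∀ i : Fin n, Measure.map (fun x : Fin n → X => x i) σ ≪ μ := by
    intro i
    refine Measure.AbsolutelyContinuous.mk fun A hA hA0 => ?_
    rw [Measure.map_apply (measurable_pi_apply i) hA]
    have hpre : (fun x : Fin n → X => x i) ⁻¹' A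
        = univ.pi fun l => if l = i then A else univ := by
      ext x
      simp only [mem_preimage, mem_pi, mem_univ, true_implies]
      constructor
      · intro hx l
        by_cases h : l = i
        · subst h; simpa using hx
        · simp [h]
      · intro hx
        have := hx i
        simpa using this
    rw [hpre, hσdef, Measure.pi_pi]
    refine Finset.prod_eq_zero (Finset.mem_univ i) ?_
    simp [hA0]
  have hMP : MeasurePreserving (piMap (⇑T) n) σ σ :=
    measurePreserving_pi (fun _ : Fin n => μ) (fun _ : Fin n => μ) (fun _ => hT)
  obtain ⟨-, c, πs, ks, hErg, hσ⟩ := hP n hn σ hbdd hmarg hMP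
  set ν : ℕ → Measure (Fin n → X) := fun j =>
    Measure.map (zpowPiMap T (ks j)) (mPartMeasure μ (πs j)) with hν
  have hle : ∀ j, c j • ν j ≤ σ := fun j => hσ ▸ Measure.le_sum (fun j => c j • ν j) j
  have hzpowPi : ∀ (k : Fin n → ℤ), Measurable (zpowPiMap T k) := fun k =>
    measurable_pi_iff.mpr fun i => (hTzm (k i)).comp (measurable_pi_apply i)
  have hFmeas : ∀ π : Finpartition (Finset.univ : Finset (Fin n)),
      Measurable (fun y : {Q // Q ∈ π.parts} → X =>
        fun i => y ⟨π.part i, π.part_mem.2 (Finset.mem_univ i)⟩) := fun π =>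
    measurable_pi_iff.mpr fun i => measurable_pi_apply _
  have hσuniv : σ univ ≠ 0 := by
    rw [hσdef, Measure.pi_univ]
    refine Finset.prod_ne_zero_iff.mpr fun i _ => ?_
    rw [hμinf]; exact top_ne_zero
  have key : ∀ j, c j ≠ 0 → ν j = σ := by
    intro j hcj
    by_cases hdisc : ∀ i i' : Fin n, i' ∈ (πs j).part i → i' = i
    · show Measure.map (zpowPiMap T (ks j)) (mPartMeasure μ (πs j)) = σ
      rw [mPartMeasure_discrete μ (πs j) hdisc]
      exact (measurePreserving_pi (fun _ : Fin n => μ) (fun _ : Fin n => μ)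
        (fun i => hTzp (ks j i))).map_eq
    · exfalso
      push_neg at hdisc
      obtain ⟨i, i', hmem, hii⟩ := hdisc
      set k : Fin n → ℤ := ks j with hk
      set m : ℤ := k i - k i' with hm
      set S : Set (Fin n → X) := {x | x i = ((T : Equiv.Perm X) ^ m) (x i')} with hS'
      have hi'i : i' ≠ i := hii
      have hS : MeasurableSet S :=
        msEqFun (measurable_pi_apply i) ((hTzm m).comp (measurable_pi_apply i'))
      have hσS : σ S = 0 := pi_graph_null μ hμcont hi'i (hTzm m)
      have hpp : (πs j).part i' = (πs j).part i :=
        (πs j).part_eq_of_mem ((πs j).part_mem.2 (Finset.mem_univ i)) hmem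
      have hmD : (mPartMeasure μ (πs j)) ((zpowPiMap T k) ⁻¹' Sᶜ) = 0 := by
        rw [mPartMeasure, Measure.map_apply (hFmeas (πs j))
          (((hzpowPi k) hS.compl : MeasurableSet _))]
        convert measure_empty (μ := Measure.pi fun _ : {Q // Q ∈ (πs j).parts} => μ)
        refine eq_empty_iff_forall_notMem.mpr fun y hy => ?_
        simp only [mem_preimage, mem_compl_iff] at hy
        apply hy
        show (zpowPiMap T k (fun i => y ⟨(πs j).part i, (πs j).part_mem.2 (Finset.mem_univ i)⟩)) i
          = ((T : Equiv.Perm X) ^ m)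
            ((zpowPiMap T k (fun i => y ⟨(πs j).part i, (πs j).part_mem.2 (Finset.mem_univ i)⟩)) i')
        show ((T : Equiv.Perm X) ^ (k i)) (y ⟨(πs j).part i, (πs j).part_mem.2 (Finset.mem_univ i)⟩)
          = ((T : Equiv.Perm X) ^ m) (((T : Equiv.Perm X) ^ (k i'))
              (y ⟨(πs j).part i', (πs j).part_mem.2 (Finset.mem_univ i')⟩))
        have hyy : y ⟨(πs j).part i', (πs j).part_mem.2 (Finset.mem_univ i')⟩
            = y ⟨(πs j).part i, (πs j).part_mem.2 (Finset.mem_univ i)⟩ :=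
          congrArg y (Subtype.ext hpp)
        rw [hyy, ← Equiv.Perm.mul_apply, ← zpow_add, hm, sub_add_cancel]
      have hνSc : ν j Sᶜ = 0 := by
        show (Measure.map (zpowPiMap T k) (mPartMeasure μ (πs j))) Sᶜ = 0
        rw [Measure.map_apply (hzpowPi k) hS.compl]
        exact hmD
      have hνuniv : ν j univ ≠ 0 := by
        show (Measure.map (zpowPiMap T k) (mPartMeasure μ (πs j))) univ ≠ 0
        rw [Measure.map_apply (hzpowPi k) MeasurableSet.univ, preimage_univ,
          mPartMeasure, Measure.map_apply (hFmeas (πs j)) MeasurableSet.univ, preimage_univ,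
          Measure.pi_univ]
        refine Finset.prod_ne_zero_iff.mpr fun Q _ => ?_
        rw [hμinf]; exact top_ne_zero
      have hνS : ν j univ ≤ ν j S := by
        have h1 := measure_union_le (μ := ν j) S Sᶜ
        rw [union_compl_self, hνSc, add_zero] at h1
        exact h1
      have hc0 : c j * ν j S = 0 := by
        have h2 : (c j • ν j) S ≤ σ S := Measure.le_iff'.mp (hle j) S
        rw [hσS, Measure.smul_apply, smul_eq_mul] at h2
        exact le_antisymm h2 zero_le
      rcases mul_eq_zero.mp hc0 with h | h
      · exact hcj h
      · exact hνuniv (le_antisymm (h ▸ hνS) zero_le)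
  have hex : ∃ j, c j ≠ 0 := by
    by_contra hcon
    push_neg at hcon
    have hz : σ = 0 := by
      rw [hσ]
      have : (fun j => c j • ν j) = fun _ => (0 : Measure (Fin n → X)) :=
        funext fun j => by rw [hcon j, zero_smul]
      rw [this, Measure.sum_zero]
    rw [hz] at hσuniv
    exact hσuniv rfl
  obtain ⟨j, hj⟩ := hex
  have hEj := hErg j hj
  rwa [show Measure.map (zpowPiMap T (ks j)) (mPartMeasure μ (πs j)) = σ from key j hj] at hEj

end PPP
end
end
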